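/- arXiv:1402.0818 — 9 statements merged into one kernel-verified Lean document; each statement's English description precedes it below -/
import Mathlib

section
/- If X is an ASQ Banach space, then for every finite-dimensional subspace E ⊂ X and every ε > 0 there exists y ∈ S_X such that (1 − ε)·max(‖x‖, |λ|) ≤ ‖x + λy‖ ≤ (1 + ε)·max(‖x‖, |λ|) for all scalars λ and all x ∈ E. -/
/-- A Banach space is almost square (ASQ): for every finite set of unit vectors
and every `ε > 0` there is a unit vector `y` with `‖x ± y‖ ≤ 1 + ε` for all `x`
in the finite set. -/
def IsASQ (X : Type*) [NormedAddCommGroup X] [NormedSpace ℝ X] : Prop :=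
  ∀ S : Finset X, (∀ x ∈ S, ‖x‖ = 1) → ∀ ε : ℝ, 0 < ε →
    ∃ y : X, ‖y‖ = 1 ∧ ∀ x ∈ S, ‖x + y‖ ≤ 1 + ε ∧ ‖x - y‖ ≤ 1 + ε

/-- Convexity: if `‖z + y‖ ≤ c` and `‖z - y‖ ≤ c` then `‖z + t • y‖ ≤ c` for `|t| ≤ 1`. -/
lemma aux_convex {X : Type*} [NormedAddCommGroup X] [NormedSpace ℝ X]
    {z y : X} {c t : ℝ} (h1 : ‖z + y‖ ≤ c) (h2 : ‖z - y‖ ≤ c) (ht : |t| ≤ 1) :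
    ‖z + t • y‖ ≤ c := by
  have ht1 : -1 ≤ t := neg_le_of_abs_le ht
  have ht2 : t ≤ 1 := le_of_abs_le ht
  have key : z + t • y = ((1 + t) / 2) • (z + y) + ((1 - t) / 2) • (z - y) := by
    rw [smul_add, smul_sub]
    module
  rw [key]
  calc ‖((1 + t) / 2) • (z + y) + ((1 - t) / 2) • (z - y)‖
      ≤ ‖((1 + t) / 2) • (z + y)‖ + ‖((1 - t) / 2) • (z - y)‖ := norm_add_le _ _
    _ = ((1 + t) / 2) * ‖z + y‖ + ((1 - t) / 2) * ‖z - y‖ := by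
        rw [norm_smul, norm_smul, Real.norm_eq_abs, Real.norm_eq_abs,
          abs_of_nonneg (by linarith), abs_of_nonneg (by linarith)]
    _ ≤ ((1 + t) / 2) * c + ((1 - t) / 2) * c := by
        have hc : 0 ≤ c := le_trans (norm_nonneg _) h1
        gcongr <;> linarith
    _ = c := by ring

theorem stmt_4 (X : Type*) [NormedAddCommGroup X] [NormedSpace ℝ X] [CompleteSpace X]
    (h : IsASQ X) (E : Submodule ℝ X) (hE : FiniteDimensional ℝ E)
    (ε : ℝ) (hε : 0 < ε) :
    ∃ y : X, ‖y‖ = 1 ∧ ∀ x ∈ E, ∀ lam : ℝ,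
      (1 - ε) * max ‖x‖ |lam| ≤ ‖x + lam • y‖ ∧
        ‖x + lam • y‖ ≤ (1 + ε) * max ‖x‖ |lam| := by
  set δ : ℝ := ε / 2 with hδdef
  have hδ : 0 < δ := by positivity
  -- the unit sphere of E, as a subset of X, is compact
  have hcomp : IsCompact ((Subtype.val : E → X) '' Metric.sphere (0 : E) 1) :=
    (isCompact_sphere (0 : E) 1).image continuous_subtype_val
  -- get a finite δ-net with centers in the sphere
  obtain ⟨t, hts, htfin, htcov⟩ :=
    hcomp.totallyBounded.exists_subset (Metric.dist_mem_uniformity hδ)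
  -- net vectors are unit vectors
  have htunit : ∀ z ∈ htfin.toFinset, ‖z‖ = 1 := by
    intro z hz
    rw [Set.Finite.mem_toFinset] at hz
    obtain ⟨w, hw, rfl⟩ := hts hz
    exact mem_sphere_zero_iff_norm.mp hw
  obtain ⟨y, hy, hball⟩ := h htfin.toFinset htunit δ hδ
  refine ⟨y, hy, ?_⟩
  -- key upper bound: for x ∈ E with ‖x‖ ≤ 1 and |t| ≤ 1, ‖x + t•y‖ ≤ 1 + ε
  have key : ∀ x ∈ E, ‖x‖ ≤ 1 → ∀ t : ℝ, |t| ≤ 1 → ‖x + t • y‖ ≤ 1 + ε := by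
    intro x hx hxle t ht
    by_cases hx0 : x = 0
    · subst hx0
      rw [zero_add, norm_smul, hy, Real.norm_eq_abs, mul_one]
      linarith
    · have hxn : 0 < ‖x‖ := norm_pos_iff.mpr hx0
      set xh : X := ‖x‖⁻¹ • x with hxhdef
      have hxh_mem : xh ∈ (Subtype.val : E → X) '' Metric.sphere (0 : E) 1 := by
        refine ⟨⟨xh, E.smul_mem _ hx⟩, ?_, rfl⟩
        rw [mem_sphere_zero_iff_norm]
        show ‖xh‖ = 1
        simp [hxhdef, norm_smul, abs_of_pos (inv_pos.mpr hxn), inv_mul_cancel₀ hxn.ne']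
      obtain ⟨z, hz, hxz⟩ := Set.mem_iUnion₂.mp (htcov hxh_mem)
      have hzmem : z ∈ htfin.toFinset := Set.Finite.mem_toFinset _ |>.mpr hz
      obtain ⟨hz1, hz2⟩ := hball z hzmem
      have hzt : ‖z + t • y‖ ≤ 1 + δ := aux_convex hz1 hz2 ht
      have hdist : ‖xh - z‖ < δ := by
        have := hxz
        simpa [dist_eq_norm] using this
      have hxht : ‖xh + t • y‖ ≤ 1 + 2 * δ := by
        calc ‖xh + t • y‖ = ‖(z + t • y) + (xh - z)‖ := by abel_nf
          _ ≤ ‖z + t • y‖ + ‖xh - z‖ := norm_add_le _ _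
          _ ≤ (1 + δ) + δ := by linarith
          _ = 1 + 2 * δ := by ring
      -- x + t•y = ‖x‖ • (xh + t•y) + (1 - ‖x‖) • (t • y)
      have hsplit : x + t • y = ‖x‖ • (xh + t • y) + (1 - ‖x‖) • (t • y) := by
        rw [hxhdef, smul_add, smul_smul, mul_inv_cancel₀ hxn.ne', one_smul]
        module
      rw [hsplit]
      calc ‖‖x‖ • (xh + t • y) + (1 - ‖x‖) • (t • y)‖
          ≤ ‖x‖ * ‖xh + t • y‖ + (1 - ‖x‖) * ‖t • y‖ := by
            refine le_trans (norm_add_le _ _) ?_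
            rw [norm_smul, norm_smul, Real.norm_eq_abs, Real.norm_eq_abs,
              abs_of_pos hxn, abs_of_nonneg (by linarith)]
        _ ≤ ‖x‖ * (1 + 2 * δ) + (1 - ‖x‖) * (1 + 2 * δ) := by
            have : ‖t • y‖ ≤ 1 + 2 * δ := by
              rw [norm_smul, hy, mul_one, Real.norm_eq_abs]; linarith
            gcongr <;> linarith
        _ = 1 + 2 * δ := by ring
        _ = 1 + ε := by rw [hδdef]; ring
  -- general upper bound by scaling
  have upper : ∀ x ∈ E, ∀ lam : ℝ, ‖x + lam • y‖ ≤ (1 + ε) * max ‖x‖ |lam| := by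
    intro x hx lam
    set m : ℝ := max ‖x‖ |lam| with hm
    by_cases hm0 : m = 0
    · have hx0 : ‖x‖ = 0 := le_antisymm (hm0 ▸ le_max_left _ _) (norm_nonneg _)
      have hl0 : |lam| = 0 := le_antisymm (hm0 ▸ le_max_right _ _) (abs_nonneg _)
      rw [norm_eq_zero.mp hx0, abs_eq_zero.mp hl0, hm0]
      simp
    · have hmpos : 0 < m := lt_of_le_of_ne (le_max_of_le_left (norm_nonneg _)) (Ne.symm hm0)
      have h1 : ‖m⁻¹ • x‖ ≤ 1 := by
        rw [norm_smul, Real.norm_eq_abs, abs_of_pos (inv_pos.mpr hmpos)]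
        rw [inv_mul_le_iff₀ hmpos, mul_one]
        exact le_max_left _ _
      have h2 : |lam / m| ≤ 1 := by
        rw [abs_div, abs_of_pos hmpos, div_le_one hmpos]
        exact le_max_right _ _
      have := key (m⁻¹ • x) (E.smul_mem _ hx) h1 (lam / m) h2
      have heq : x + lam • y = m • (m⁻¹ • x + (lam / m) • y) := by
        rw [smul_add, smul_smul, smul_smul, mul_inv_cancel₀ hmpos.ne',
          mul_div_cancel₀ _ hmpos.ne', one_smul]
      rw [heq, norm_smul, Real.norm_eq_abs, abs_of_pos hmpos, mul_comm]
      exact mul_le_mul_of_nonneg_right this hmpos.le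
  intro x hx lam
  refine ⟨?_, upper x hx lam⟩
  -- lower bound via triangle inequality
  have hneg : ‖x - lam • y‖ ≤ (1 + ε) * max ‖x‖ |lam| := by
    have := upper x hx (-lam)
    rw [neg_smul] at this
    rw [sub_eq_add_neg]
    simpa [abs_neg] using this
  set m : ℝ := max ‖x‖ |lam| with hm
  have hx2 : 2 * ‖x‖ ≤ ‖x + lam • y‖ + ‖x - lam • y‖ := by
    have : (2 : ℝ) • x = (x + lam • y) + (x - lam • y) := by module
    calc 2 * ‖x‖ = ‖(2 : ℝ) • x‖ := by
          rw [norm_smul]; norm_num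
      _ = ‖(x + lam • y) + (x - lam • y)‖ := by rw [this]
      _ ≤ _ := norm_add_le _ _
  have hl2 : 2 * |lam| ≤ ‖x + lam • y‖ + ‖x - lam • y‖ := by
    have heq : (2 * lam) • y = (x + lam • y) - (x - lam • y) := by module
    calc 2 * |lam| = ‖(2 * lam) • y‖ := by
          rw [norm_smul, hy, mul_one, Real.norm_eq_abs, abs_mul]; norm_num
      _ = ‖(x + lam • y) - (x - lam • y)‖ := by rw [heq]
      _ ≤ _ := norm_sub_le _ _
  have hmax : 2 * m ≤ ‖x + lam • y‖ + ‖x - lam • y‖ := by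
    rcases max_cases ‖x‖ |lam| with ⟨he, _⟩ | ⟨he, _⟩ <;> rw [hm, he]
    exacts [hx2, hl2]
  nlinarith [norm_nonneg (x - lam • y), hneg]
end

section
/- If X is an ASQ Banach space, E ⊂ X a finite-dimensional subspace, F ⊂ X* a finite-dimensional subspace of the dual, and ε > 0, then there exists y ∈ S_X such that (1 − ε)·max(‖x‖, |λ|) ≤ ‖x + λy‖ ≤ (1 + ε)·max(‖x‖, |λ|) for all x ∈ E and scalars λ, and additionally |f(y)| ≤ ε‖f‖ for every f ∈ F. -/
section AuxASQ

variable {Y : Type*} [NormedAddCommGroup Y] [NormedSpace ℝ Y]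

/-- A finite δ-net of the unit sphere of a finite-dimensional subspace. -/
lemma asq_exists_net (p : Submodule ℝ Y) [FiniteDimensional ℝ p] {δ : ℝ} (hδ : 0 < δ) :
    ∃ T : Finset Y, (∀ u ∈ T, u ∈ p ∧ ‖u‖ = 1) ∧
      ∀ v ∈ (p : Set Y), ‖v‖ = 1 → ∃ u ∈ T, ‖v - u‖ ≤ δ := by
  have hK : IsCompact ((Subtype.val : p → Y) '' Metric.sphere (0:p) 1) :=
    (isCompact_sphere (0:p) 1).image continuous_subtype_val
  obtain ⟨t, hts, htf, hcov⟩ := totallyBounded_iff_subset.mp hK.totallyBounded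
    {q : Y × Y | dist q.1 q.2 < δ} (Metric.dist_mem_uniformity hδ)
  refine ⟨htf.toFinset, ?_, ?_⟩
  · intro u hu
    rw [Set.Finite.mem_toFinset] at hu
    obtain ⟨w, hw, rfl⟩ := hts hu
    rw [Metric.mem_sphere, dist_zero_right] at hw
    exact ⟨w.2, hw⟩
  · intro v hv hv1
    have : v ∈ (Subtype.val : p → Y) '' Metric.sphere (0:p) 1 := by
      refine ⟨⟨v, hv⟩, ?_, rfl⟩
      rw [Metric.mem_sphere, dist_zero_right]
      exact hv1
    obtain ⟨u, hu, hmem⟩ := Set.mem_iUnion₂.mp (hcov this)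
    exact ⟨u, Set.Finite.mem_toFinset _ |>.mpr hu, le_of_lt (by simpa [dist_eq_norm] using hmem)⟩

/-- Convexity in the `y`-coefficient. -/
lemma asq_tmix {u y : Y} {δ t : ℝ} (hδ : 0 ≤ δ)
    (h1 : ‖u + y‖ ≤ 1 + δ) (h2 : ‖u - y‖ ≤ 1 + δ) (ht : |t| ≤ 1) :
    ‖u + t • y‖ ≤ 1 + δ := by
  have habs := abs_le.mp ht
  have key : u + t • y = ((1+t)/2) • (u + y) + ((1-t)/2) • (u - y) := by module
  calc ‖u + t • y‖ ≤ ‖((1+t)/2) • (u + y)‖ + ‖((1-t)/2) • (u - y)‖ := by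
        rw [key]; exact norm_add_le _ _
    _ = ((1+t)/2) * ‖u + y‖ + ((1-t)/2) * ‖u - y‖ := by
        rw [norm_smul, norm_smul, Real.norm_of_nonneg (by linarith),
          Real.norm_of_nonneg (by linarith)]
    _ ≤ ((1+t)/2) * (1+δ) + ((1-t)/2) * (1+δ) := by
        gcongr <;> linarith
    _ = 1 + δ := by ring

/-- Scaling lemma. -/
lemma asq_scaled {u y : Y} {δ c t : ℝ} (hδ : 0 ≤ δ) (hy : ‖y‖ ≤ 1)
    (h1 : ‖u + y‖ ≤ 1 + δ) (h2 : ‖u - y‖ ≤ 1 + δ) (hc : 0 ≤ c) (ht : |t| ≤ 1) :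
    ‖c • u + t • y‖ ≤ max c 1 * (1 + δ) := by
  rcases le_total c 1 with hcle | hcge
  · have key : c • u + t • y = c • (u + t • y) + ((1-c)*t) • y := by module
    have h3 : ‖u + t • y‖ ≤ 1 + δ := asq_tmix hδ h1 h2 ht
    have : ‖c • u + t • y‖ ≤ c * (1+δ) + (1-c) * |t| := by
      calc ‖c • u + t • y‖ ≤ ‖c • (u + t • y)‖ + ‖((1-c)*t) • y‖ := by
            rw [key]; exact norm_add_le _ _
        _ = c * ‖u + t • y‖ + |(1-c)*t| * ‖y‖ := by
            rw [norm_smul, norm_smul, Real.norm_of_nonneg hc, Real.norm_eq_abs]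
        _ ≤ c * (1+δ) + (1-c) * |t| := by
            rw [abs_mul, abs_of_nonneg (by linarith : (0:ℝ) ≤ 1 - c)]
            have h4 : |t| * ‖y‖ ≤ |t| * 1 := by
              apply mul_le_mul_of_nonneg_left hy (abs_nonneg t)
            nlinarith [abs_nonneg t, norm_nonneg (u + t • y), mul_le_mul_of_nonneg_left h3 hc]
    have hm : max c 1 = 1 := max_eq_right hcle
    rw [hm, one_mul]
    have := abs_le.mp ht
    nlinarith
  · have hcpos : 0 < c := lt_of_lt_of_le one_pos hcge
    have key : c • u + t • y = c • (u + (t/c) • y) := by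
      rw [smul_add, smul_smul]
      congr 1
      rw [mul_div_cancel₀ _ (ne_of_gt hcpos)]
    have htc : |t/c| ≤ 1 := by
      rw [abs_div, abs_of_pos hcpos, div_le_one hcpos]
      exact le_trans ht hcge
    have h3 : ‖u + (t/c) • y‖ ≤ 1 + δ := asq_tmix hδ h1 h2 htc
    rw [key, norm_smul, Real.norm_of_nonneg hc, max_eq_left hcge]
    exact mul_le_mul_of_nonneg_left h3 hc

/-- Upper bound on `‖x + λ y‖` for `x` in a subspace with a net. -/
lemma asq_E_upper {E : Submodule ℝ Y} {T : Finset Y} {δE δ : ℝ}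
    (hδE : 0 ≤ δE) (hδ : 0 ≤ δ) {y : Y} (hy : ‖y‖ = 1)
    (hnet : ∀ v ∈ (E : Set Y), ‖v‖ = 1 → ∃ u ∈ T, ‖v - u‖ ≤ δE)
    (hcond : ∀ u ∈ T, ‖u + y‖ ≤ 1 + δ ∧ ‖u - y‖ ≤ 1 + δ) :
    ∀ x ∈ E, ∀ lam : ℝ, ‖x + lam • y‖ ≤ (1 + (δ + δE)) * max ‖x‖ |lam| := by
  have ball : ∀ v ∈ E, ‖v‖ ≤ 1 → ∀ t : ℝ, |t| ≤ 1 → ‖v + t • y‖ ≤ 1 + (δ + δE) := by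
    intro v hv hv1 t ht
    by_cases hv0 : v = 0
    · subst hv0
      rw [zero_add, norm_smul, Real.norm_eq_abs, hy, mul_one]
      linarith
    · have hvn : 0 < ‖v‖ := norm_pos_iff.mpr hv0
      set u0 : Y := ‖v‖⁻¹ • v with hu0def
      have hu0E : u0 ∈ E := E.smul_mem _ hv
      have hu0n : ‖u0‖ = 1 := by
        rw [hu0def, norm_smul, Real.norm_eq_abs, abs_of_pos (inv_pos.mpr hvn),
          inv_mul_cancel₀ (ne_of_gt hvn)]
      obtain ⟨u, huT, hud⟩ := hnet u0 hu0E hu0n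
      obtain ⟨h1, h2⟩ := hcond u huT
      have h3 : ‖u + t • y‖ ≤ 1 + δ := asq_tmix hδ h1 h2 ht
      have h4 : ‖u0 + t • y‖ ≤ 1 + δ + δE := by
        calc ‖u0 + t • y‖ = ‖(u + t • y) + (u0 - u)‖ := by congr 1; abel
          _ ≤ ‖u + t • y‖ + ‖u0 - u‖ := norm_add_le _ _
          _ ≤ (1 + δ) + δE := by
              have : ‖u0 - u‖ ≤ δE := hud
              linarith
      have key : v + t • y = ‖v‖ • (u0 + t • y) + ((1 - ‖v‖)*t) • y := by
        rw [hu0def]; rw [smul_add, smul_smul, smul_smul,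
          mul_inv_cancel₀ (ne_of_gt hvn), one_smul]; module
      calc ‖v + t • y‖ ≤ ‖v‖ * ‖u0 + t • y‖ + |(1 - ‖v‖)*t| * ‖y‖ := by
            rw [key]
            refine le_trans (norm_add_le _ _) ?_
            rw [norm_smul, norm_smul, Real.norm_of_nonneg (norm_nonneg v), Real.norm_eq_abs]
        _ ≤ ‖v‖ * (1 + δ + δE) + (1 - ‖v‖) * 1 := by
            have e1 : ‖v‖ * ‖u0 + t • y‖ ≤ ‖v‖ * (1 + δ + δE) :=
              mul_le_mul_of_nonneg_left h4 (norm_nonneg v)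
            have e2 : |(1 - ‖v‖)*t| * ‖y‖ ≤ (1 - ‖v‖) * 1 := by
              rw [hy, mul_one, abs_mul, abs_of_nonneg (by linarith : (0:ℝ) ≤ 1 - ‖v‖)]
              have := abs_le.mp ht
              nlinarith
            linarith
        _ ≤ ‖v‖ * (1 + δ + δE) + (1 - ‖v‖) * (1 + δ + δE) := by
            gcongr
            · linarith
        _ = 1 + (δ + δE) := by ring
  intro x hx lam
  set M := max ‖x‖ |lam| with hM
  have hM0 : 0 ≤ M := le_trans (norm_nonneg x) (le_max_left _ _)
  rcases eq_or_lt_of_le hM0 with hMeq | hMpos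
  · have hx0 : ‖x‖ = 0 := le_antisymm (hMeq ▸ le_max_left _ _) (norm_nonneg x)
    have hl0 : |lam| = 0 := le_antisymm (hMeq ▸ le_max_right _ _) (abs_nonneg lam)
    rw [norm_eq_zero.mp hx0, abs_eq_zero.mp hl0, zero_smul, add_zero, norm_zero]
    nlinarith
  · have hMne : M ≠ 0 := ne_of_gt hMpos
    have hv : ‖M⁻¹ • x‖ ≤ 1 := by
      rw [norm_smul, Real.norm_eq_abs, abs_of_pos (inv_pos.mpr hMpos)]
      rw [inv_mul_le_iff₀ hMpos, mul_one]
      exact le_max_left _ _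
    have ht : |M⁻¹ * lam| ≤ 1 := by
      rw [abs_mul, abs_of_pos (inv_pos.mpr hMpos)]
      rw [inv_mul_le_iff₀ hMpos, mul_one]
      exact le_max_right _ _
    have hb := ball (M⁻¹ • x) (E.smul_mem _ hx) hv (M⁻¹ * lam) ht
    have key : x + lam • y = M • (M⁻¹ • x + (M⁻¹ * lam) • y) := by
      rw [smul_add, smul_smul, smul_smul, mul_inv_cancel₀ hMne, one_smul,
        ← mul_assoc, mul_inv_cancel₀ hMne, one_mul]
    rw [key, norm_smul, Real.norm_of_nonneg hM0, mul_comm]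
    exact mul_le_mul_of_nonneg_right hb hM0

end AuxASQ

section Build

variable {X : Type*} [NormedAddCommGroup X] [NormedSpace ℝ X]

lemma asq_build (h : IsASQ X) (T : Finset X) (hT : ∀ u ∈ T, ‖u‖ = 1)
    {δ : ℝ} (hδ : 0 < δ) :
    ∀ k : ℕ, 2 * k * δ ≤ 1 → ∃ y : Fin k → X,
      (∀ i, ‖y i‖ = 1) ∧
      (∀ i, ∀ u ∈ T, ‖u + y i‖ ≤ 1 + δ ∧ ‖u - y i‖ ≤ 1 + δ) ∧
      (∀ σ : Fin k → Bool, ‖∑ i, (if σ i then (1:ℝ) else -1) • y i‖ ≤ 1 + 2 * k * δ) := by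
  intro k
  induction k with
  | zero =>
    intro _
    refine ⟨fun i => i.elim0, fun i => i.elim0, fun i => i.elim0, fun σ => ?_⟩
    simp
  | succ k ih =>
    intro hk1
    have hkk : 2 * (k:ℝ) * δ ≤ 1 := by
      have : (k:ℝ) ≤ (k:ℝ) + 1 := by linarith
      calc 2 * (k:ℝ) * δ ≤ 2 * ((k:ℝ)+1) * δ := by nlinarith
        _ = 2 * ((k+1 : ℕ):ℝ) * δ := by push_cast; ring
        _ ≤ 1 := hk1
    obtain ⟨y, hy1, hyT, hys⟩ := ih hkk
    classical
    set A : (Fin k → Bool) → X := fun σ => ∑ i, (if σ i then (1:ℝ) else -1) • y i with hA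
    set S : Finset X := T ∪ Finset.image (fun σ => ‖A σ‖⁻¹ • A σ)
      (Finset.univ.filter fun σ => A σ ≠ 0) with hS
    have hSnorm : ∀ u ∈ S, ‖u‖ = 1 := by
      intro u hu
      rw [hS, Finset.mem_union] at hu
      rcases hu with hu | hu
      · exact hT u hu
      · obtain ⟨σ, hσ, rfl⟩ := Finset.mem_image.mp hu
        rw [Finset.mem_filter] at hσ
        have hne : A σ ≠ 0 := hσ.2
        have : ‖A σ‖ ≠ 0 := norm_ne_zero_iff.mpr hne
        rw [norm_smul, Real.norm_eq_abs, abs_of_nonneg (inv_nonneg.mpr (norm_nonneg _)),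
          inv_mul_cancel₀ this]
    obtain ⟨z, hz1, hzc⟩ := h S hSnorm δ hδ
    refine ⟨Fin.cons z y, ?_, ?_, ?_⟩
    · intro i
      refine Fin.cases ?_ ?_ i
      · simpa using hz1
      · intro j; simpa using hy1 j
    · intro i u hu
      refine Fin.cases ?_ ?_ i
      · simpa using hzc u (Finset.mem_union_left _ hu)
      · intro j; simpa using hyT j u hu
    · intro σ'
      rw [Fin.sum_univ_succ]
      simp only [Fin.cons_zero, Fin.cons_succ]
      set s : ℝ := if σ' 0 then (1:ℝ) else -1 with hsdef
      set σ : Fin k → Bool := fun i => σ' i.succ with hσdef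
      have hsum : ∑ i : Fin k, (if σ' i.succ then (1:ℝ) else -1) • y i = A σ := rfl
      have hs1 : |s| = 1 := by
        rw [hsdef]; rcases σ' 0 <;> simp
      by_cases hA0 : A σ = 0
      · rw [hsum, hA0, add_zero, norm_smul, hz1, Real.norm_eq_abs, hs1, mul_one]
        have : (0:ℝ) ≤ 2 * ((k+1:ℕ):ℝ) * δ := by positivity
        linarith
      · have hmem : ‖A σ‖⁻¹ • A σ ∈ S := by
          rw [hS]
          refine Finset.mem_union_right _ (Finset.mem_image.mpr ⟨σ, ?_, rfl⟩)
          rw [Finset.mem_filter]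
          exact ⟨Finset.mem_univ _, hA0⟩
        obtain ⟨h1, h2⟩ := hzc _ hmem
        have hcn : (0:ℝ) < ‖A σ‖ := norm_pos_iff.mpr hA0
        have key : s • z + A σ = ‖A σ‖ • (‖A σ‖⁻¹ • A σ) + s • z := by
          rw [smul_smul, mul_inv_cancel₀ (ne_of_gt hcn), one_smul, add_comm]
        have hb := asq_scaled (le_of_lt hδ) (le_of_eq hz1) h1 h2 (le_of_lt hcn)
          (le_of_eq hs1)
        rw [hsum, key]
        have hAle : ‖A σ‖ ≤ 1 + 2 * (k:ℝ) * δ := hys σ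
        have hmax : max ‖A σ‖ 1 ≤ 1 + 2 * (k:ℝ) * δ := by
          apply max_le hAle
          nlinarith [hδ.le, Nat.cast_nonneg (α := ℝ) k]
        calc ‖‖A σ‖ • (‖A σ‖⁻¹ • A σ) + s • z‖ ≤ max ‖A σ‖ 1 * (1 + δ) := hb
          _ ≤ (1 + 2 * (k:ℝ) * δ) * (1 + δ) := by
              apply mul_le_mul_of_nonneg_right hmax (by linarith)
          _ ≤ 1 + 2 * ((k+1:ℕ):ℝ) * δ := by
              push_cast
              nlinarith

end Build

set_option maxHeartbeats 1000000 in
theorem stmt_5 (X : Type*) [NormedAddCommGroup X] [NormedSpace ℝ X] [CompleteSpace X]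
    (h : IsASQ X) (E : Submodule ℝ X) (hE : FiniteDimensional ℝ E)
    (F : Submodule ℝ (StrongDual ℝ X)) (hF : FiniteDimensional ℝ F)
    (ε : ℝ) (hε : 0 < ε) :
    ∃ y : X, ‖y‖ = 1 ∧
      (∀ x ∈ E, ∀ lam : ℝ,
        (1 - ε) * max ‖x‖ |lam| ≤ ‖x + lam • y‖ ∧
          ‖x + lam • y‖ ≤ (1 + ε) * max ‖x‖ |lam|) ∧
      (∀ f ∈ F, |f y| ≤ ε * ‖f‖) := by
  classical
  have hε3 : (0:ℝ) < ε/3 := by linarith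
  obtain ⟨TF, hTF1, hTFnet⟩ := asq_exists_net F hε3
  obtain ⟨TE, hTE1, hTEnet⟩ := asq_exists_net E hε3
  set m : ℕ := TF.card with hm
  set n : ℕ := ⌈3 * (m:ℝ) / ε⌉₊ + 1 with hn
  have hnpos : 0 < n := Nat.succ_pos _
  have hn1 : (1:ℝ) ≤ (n:ℝ) := by exact_mod_cast hnpos
  have hnge : 3 * (m:ℝ) / ε ≤ (n:ℝ) := by
    calc 3 * (m:ℝ) / ε ≤ (⌈3 * (m:ℝ) / ε⌉₊ : ℝ) := Nat.le_ceil _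
      _ ≤ (n:ℝ) := by rw [hn]; push_cast; linarith
  clear_value m n
  have h4n : (0:ℝ) < 4 * (n:ℝ) := by linarith
  have hne : (4:ℝ) * (n:ℝ) ≠ 0 := ne_of_gt h4n
  set δ : ℝ := min (ε/3) (1/(4*(n:ℝ))) with hδdef
  have hδpos : 0 < δ := lt_min hε3 (one_div_pos.mpr h4n)
  have hδε : δ ≤ ε/3 := min_le_left _ _
  have hδn : δ ≤ 1/(4*(n:ℝ)) := min_le_right _ _
  have h2nh : 2 * (n:ℝ) * δ ≤ 1/2 := by
    calc 2 * (n:ℝ) * δ ≤ 2 * (n:ℝ) * (1/(4*(n:ℝ))) := by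
          apply mul_le_mul_of_nonneg_left hδn (by linarith)
      _ = 1/2 := by field_simp; ring
  have h2n : 2 * (n:ℝ) * δ ≤ 1 := by linarith
  clear_value δ
  obtain ⟨y, hy1, hyT, hys⟩ := asq_build h TE (fun u hu => (hTE1 u hu).2) hδpos n h2n
  have hsum32 : ∀ σ : Fin n → Bool, ‖∑ i, (if σ i then (1:ℝ) else -1) • y i‖ ≤ 3/2 := by
    intro σ
    refine le_trans (hys σ) ?_
    linarith [h2nh]
  have hfsum : ∀ f ∈ TF, (∑ i : Fin n, |f (y i)|) ≤ 3/2 := by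
    intro f hf
    set σ : Fin n → Bool := fun i => decide (0 ≤ f (y i)) with hσ
    have hcalc : f (∑ i, (if σ i then (1:ℝ) else -1) • y i) = ∑ i : Fin n, |f (y i)| := by
      rw [map_sum]
      apply Finset.sum_congr rfl
      intro i _
      rw [map_smul, smul_eq_mul]
      by_cases hpos : 0 ≤ f (y i)
      · simp [hσ, hpos, abs_of_nonneg hpos]
      · push_neg at hpos
        simp [hσ, not_le.mpr hpos, abs_of_neg hpos]
    have hb : |f (∑ i, (if σ i then (1:ℝ) else -1) • y i)| ≤
        ‖f‖ * ‖∑ i, (if σ i then (1:ℝ) else -1) • y i‖ := by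
      have := f.le_opNorm (∑ i, (if σ i then (1:ℝ) else -1) • y i)
      simpa [Real.norm_eq_abs] using this
    have hb2 : f (∑ i, (if σ i then (1:ℝ) else -1) • y i) ≤
        ‖f‖ * ‖∑ i, (if σ i then (1:ℝ) else -1) • y i‖ := le_trans (le_abs_self _) hb
    rw [hcalc] at hb2
    calc (∑ i : Fin n, |f (y i)|) ≤ ‖f‖ * ‖∑ i, (if σ i then (1:ℝ) else -1) • y i‖ := hb2
      _ = ‖∑ i, (if σ i then (1:ℝ) else -1) • y i‖ := by rw [(hTF1 f hf).2, one_mul]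
      _ ≤ 3/2 := hsum32 σ
  have hpigeon : ∃ i : Fin n, (∑ f ∈ TF, |f (y i)|) ≤ ε/2 := by
    by_contra hcon
    push_neg at hcon
    have htot : (∑ i : Fin n, ∑ f ∈ TF, |f (y i)|) ≤ (m:ℝ) * (3/2) := by
      rw [Finset.sum_comm]
      calc (∑ f ∈ TF, ∑ i : Fin n, |f (y i)|) ≤ ∑ _f ∈ TF, (3/2 : ℝ) :=
            Finset.sum_le_sum (fun f hf => hfsum f hf)
        _ = (m:ℝ) * (3/2) := by rw [Finset.sum_const, hm]; push_cast; ring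
    have hlower : (n:ℝ) * (ε/2) < ∑ i : Fin n, ∑ f ∈ TF, |f (y i)| := by
      have : ∑ _i : Fin n, (ε/2 : ℝ) < ∑ i : Fin n, ∑ f ∈ TF, |f (y i)| := by
        have : Nonempty (Fin n) := ⟨⟨0, hnpos⟩⟩
        apply Finset.sum_lt_sum_of_nonempty
        · exact Finset.univ_nonempty
        · intro i _; exact hcon i
      simpa [Finset.sum_const, Finset.card_univ, nsmul_eq_mul] using this
    have hcmp : (m:ℝ) * (3/2) ≤ (n:ℝ) * (ε/2) := by
      have h3 : 3 * (m:ℝ) ≤ (n:ℝ) * ε := by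
        rw [div_le_iff₀ hε] at hnge
        linarith
      linarith
    linarith
  obtain ⟨i0, hi0⟩ := hpigeon
  refine ⟨y i0, hy1 i0, ?_, ?_⟩
  · have hup := asq_E_upper (le_of_lt hε3) (le_of_lt hδpos) (hy1 i0) hTEnet
      (fun u hu => hyT i0 u hu)
    intro x hx lam
    set M := max ‖x‖ |lam| with hM
    have hM0 : 0 ≤ M := le_trans (norm_nonneg x) (le_max_left _ _)
    have hup1 : ‖x + lam • y i0‖ ≤ (1 + (δ + ε/3)) * M := hup x hx lam
    have hup2 : ‖x - lam • y i0‖ ≤ (1 + (δ + ε/3)) * M := by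
      have := hup x hx (-lam)
      rw [neg_smul, ← sub_eq_add_neg, abs_neg] at this
      exact this
    constructor
    · have e1 : (x + lam • y i0) + (x - lam • y i0) = (2:ℝ) • x := by module
      have e2 : (x + lam • y i0) - (x - lam • y i0) = (2*lam) • y i0 := by module
      have hx2 : 2 * ‖x‖ ≤ ‖x + lam • y i0‖ + ‖x - lam • y i0‖ := by
        have := norm_add_le (x + lam • y i0) (x - lam • y i0)
        rw [e1, norm_smul, Real.norm_ofNat] at this
        linarith
      have hl2 : 2 * |lam| ≤ ‖x + lam • y i0‖ + ‖x - lam • y i0‖ := by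
        have := norm_sub_le (x + lam • y i0) (x - lam • y i0)
        rw [e2, norm_smul, Real.norm_eq_abs, abs_mul, abs_two, hy1 i0, mul_one] at this
        linarith
      have hM2 : 2 * M ≤ ‖x + lam • y i0‖ + ‖x - lam • y i0‖ := by
        rcases max_cases ‖x‖ |lam| with ⟨he, _⟩ | ⟨he, _⟩ <;> rw [hM, he]
        · exact hx2
        · exact hl2
      nlinarith
    · have hfin : (1 + (δ + ε/3)) * M ≤ (1 + ε) * M := by nlinarith
      linarith
  · intro f hf
    by_cases hf0 : f = 0
    · subst hf0; simp
    · have hfn : (0:ℝ) < ‖f‖ := norm_pos_iff.mpr hf0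
      set g : StrongDual ℝ X := ‖f‖⁻¹ • f with hgdef
      have hgF : g ∈ F := F.smul_mem _ hf
      have hgn : ‖g‖ = 1 := by
        rw [hgdef, norm_smul, Real.norm_eq_abs, abs_of_pos (inv_pos.mpr hfn),
          inv_mul_cancel₀ (ne_of_gt hfn)]
      obtain ⟨fj, hfjT, hfjd⟩ := hTFnet g hgF hgn
      have hfj : |fj (y i0)| ≤ ε/2 :=
        le_trans (Finset.single_le_sum (f := fun f' => |f' (y i0)|)
          (fun f' _ => abs_nonneg _) hfjT) hi0
      have hdiff : |g (y i0) - fj (y i0)| ≤ ε/3 := by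
        have h1 : |(g - fj) (y i0)| ≤ ‖g - fj‖ * ‖y i0‖ := by
          have := (g - fj).le_opNorm (y i0)
          simpa [Real.norm_eq_abs] using this
        rw [ContinuousLinearMap.sub_apply, hy1 i0, mul_one] at h1
        linarith [hfjd]
      have hgY : |g (y i0)| ≤ ε := by
        calc |g (y i0)| ≤ |fj (y i0)| + |g (y i0) - fj (y i0)| := by
              have h2 := abs_add_le (fj (y i0)) (g (y i0) - fj (y i0))
              have e : fj (y i0) + (g (y i0) - fj (y i0)) = g (y i0) := by ring
              rw [e] at h2
              linarith
          _ ≤ ε/2 + ε/3 := by linarith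
          _ ≤ ε := by linarith
      have happ : g (y i0) = ‖f‖⁻¹ * f (y i0) := by
        rw [hgdef]; simp
      have hga : |g (y i0)| = ‖f‖⁻¹ * |f (y i0)| := by
        rw [happ, abs_mul, abs_of_pos (inv_pos.mpr hfn)]
      rw [hga] at hgY
      calc |f (y i0)| = ‖f‖ * (‖f‖⁻¹ * |f (y i0)|) := by
            rw [← mul_assoc, mul_inv_cancel₀ (ne_of_gt hfn), one_mul]
        _ ≤ ‖f‖ * ε := mul_le_mul_of_nonneg_left hgY (le_of_lt hfn)
        _ = ε * ‖f‖ := mul_comm _ _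
end

section
/- If X is an ASQ Banach space, then the dual X* is octahedral: for every finite subset x_1*,…,x_n* ∈ S_{X*} and every ε > 0 there exists y* ∈ S_{X*} such that ‖x_i* + y*‖ ≥ 2 − ε and ‖x_i* − y*‖ ≥ 2 − ε for all i. -/
lemma exists_unit_near {X : Type*} [NormedAddCommGroup X] [NormedSpace ℝ X]
    (f : StrongDual ℝ X) (hf : ‖f‖ = 1) (δ : ℝ) (hδ0 : 0 < δ) (hδ1 : δ < 1) :
    ∃ x : X, ‖x‖ = 1 ∧ 1 - δ < f x := by
  have hlt : (1 : ℝ) - δ < ‖f‖ := by rw [hf]; linarith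
  obtain ⟨x, hx1, hx2⟩ := f.exists_lt_apply_of_lt_opNorm hlt
  have hxabs : 1 - δ < |f x| := by rwa [Real.norm_eq_abs] at hx2
  have hxne : x ≠ 0 := by
    intro h0
    rw [h0, map_zero, abs_zero] at hxabs
    linarith
  have hxnorm : 0 < ‖x‖ := norm_pos_iff.2 hxne
  refine ⟨‖x‖⁻¹ • (if 0 ≤ f x then x else -x), ?_, ?_⟩
  · rw [norm_smul, norm_inv, norm_norm]
    have : ‖if 0 ≤ f x then x else -x‖ = ‖x‖ := by
      split <;> simp
    rw [this, inv_mul_cancel₀ hxnorm.ne']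
  · have hfval : f (if 0 ≤ f x then x else -x) = |f x| := by
      split_ifs with h
      · rw [abs_of_nonneg h]
      · rw [map_neg, abs_of_neg (not_le.1 h)]
    rw [map_smul, smul_eq_mul, hfval]
    have h1 : |f x| ≤ ‖x‖⁻¹ * |f x| := by
      rw [le_inv_mul_iff₀ hxnorm]
      calc ‖x‖ * |f x| ≤ 1 * |f x| := by
            apply mul_le_mul_of_nonneg_right hx1.le (abs_nonneg _)
        _ = |f x| := one_mul _
    linarith

theorem stmt_6 (X : Type*) [NormedAddCommGroup X] [NormedSpace ℝ X] [CompleteSpace X]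
    (h : IsASQ X) :
    ∀ S : Finset (StrongDual ℝ X), (∀ f ∈ S, ‖f‖ = 1) → ∀ ε : ℝ, 0 < ε →
      ∃ g : StrongDual ℝ X, ‖g‖ = 1 ∧
        ∀ f ∈ S, 2 - ε ≤ ‖f + g‖ ∧ 2 - ε ≤ ‖f - g‖ := by
  intro S hS ε hε
  classical
  set δ : ℝ := min (ε / 6) (1 / 2) with hδdef
  have hδ0 : 0 < δ := lt_min (by linarith) (by norm_num)
  have hδ1 : δ < 1 := lt_of_le_of_lt (min_le_right _ _) (by norm_num)
  have hδε : 6 * δ ≤ ε := by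
    have := min_le_left (ε / 6) (1 / 2)
    have hd : δ ≤ ε / 6 := this
    linarith
  have hx : ∀ f : {f // f ∈ S}, ∃ x : X, ‖x‖ = 1 ∧ 1 - δ < (f : StrongDual ℝ X) x :=
    fun f => exists_unit_near f.1 (hS f.1 f.2) δ hδ0 hδ1
  choose φ hφ1 hφ2 using hx
  set T : Finset X := S.attach.image φ with hTdef
  have hT : ∀ x ∈ T, ‖x‖ = 1 := by
    intro x hx
    rw [hTdef, Finset.mem_image] at hx
    obtain ⟨f, _, rfl⟩ := hx
    exact hφ1 f
  obtain ⟨y, hy, hbound⟩ := h T hT δ hδ0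
  have hyne : y ≠ 0 := by intro h0; rw [h0, norm_zero] at hy; norm_num at hy
  obtain ⟨g, hg, hgy⟩ := exists_dual_vector ℝ y (norm_ne_zero_iff.mpr hyne)
  have hgy1 : g y = 1 := by rw [hgy, hy]; norm_num
  have key : ∀ (u : StrongDual ℝ X) (z : X), u z ≤ ‖u‖ * ‖z‖ := fun u z =>
    (le_abs_self _).trans (by rw [← Real.norm_eq_abs]; exact u.le_opNorm z)
  refine ⟨g, hg, ?_⟩
  intro f hf
  set x := φ ⟨f, hf⟩ with hxdef
  have hx1 : ‖x‖ = 1 := hφ1 ⟨f, hf⟩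
  have hx2 : 1 - δ < f x := hφ2 ⟨f, hf⟩
  have hxT : x ∈ T := by
    rw [hTdef, Finset.mem_image]
    exact ⟨⟨f, hf⟩, Finset.mem_attach _ _, rfl⟩
  obtain ⟨hpy, hmy⟩ := hbound x hxT
  -- bounds on f y
  have hf1 : f (x + y) ≤ 1 + δ := by
    calc f (x + y) ≤ ‖f‖ * ‖x + y‖ := key f _
      _ ≤ 1 * (1 + δ) := by
          rw [hS f hf]; exact mul_le_mul_of_nonneg_left hpy (by norm_num)
      _ = 1 + δ := one_mul _
  have hf2 : f (x - y) ≤ 1 + δ := by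
    calc f (x - y) ≤ ‖f‖ * ‖x - y‖ := key f _
      _ ≤ 1 * (1 + δ) := by
          rw [hS f hf]; exact mul_le_mul_of_nonneg_left hmy (by norm_num)
      _ = 1 + δ := one_mul _
  have hfy_ub : f y ≤ 2 * δ := by
    rw [map_add] at hf1; linarith
  have hfy_lb : -(2 * δ) ≤ f y := by
    rw [map_sub] at hf2; linarith
  -- bounds on g x
  have hg1 : g (x + y) ≤ 1 + δ := by
    calc g (x + y) ≤ ‖g‖ * ‖x + y‖ := key g _
      _ ≤ 1 * (1 + δ) := by
          rw [hg]; exact mul_le_mul_of_nonneg_left hpy (by norm_num)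
      _ = 1 + δ := one_mul _
  have hg2 : g (y - x) ≤ 1 + δ := by
    calc g (y - x) ≤ ‖g‖ * ‖y - x‖ := key g _
      _ ≤ 1 * (1 + δ) := by
          rw [hg, norm_sub_rev]
          exact mul_le_mul_of_nonneg_left hmy (by norm_num)
      _ = 1 + δ := one_mul _
  have hgx_ub : g x ≤ δ := by
    rw [map_add, hgy1] at hg1; linarith
  have hgx_lb : -δ ≤ g x := by
    rw [map_sub, hgy1] at hg2; linarith
  have hδpos : (0:ℝ) < 1 + δ := by linarith
  constructor
  · have hval : 2 - 4 * δ ≤ (f + g) (x + y) := by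
      simp only [ContinuousLinearMap.add_apply, map_add, hgy1]
      linarith
    have hub : (f + g) (x + y) ≤ ‖f + g‖ * (1 + δ) := by
      calc (f + g) (x + y) ≤ ‖f + g‖ * ‖x + y‖ := key _ _
        _ ≤ ‖f + g‖ * (1 + δ) := mul_le_mul_of_nonneg_left hpy (norm_nonneg _)
    have hN : 2 - 4 * δ ≤ ‖f + g‖ * (1 + δ) := hval.trans hub
    nlinarith [norm_nonneg (f + g), hδ0.le]
  · have hval : 2 - 4 * δ ≤ (f - g) (x - y) := by
      simp only [ContinuousLinearMap.sub_apply, map_sub, hgy1]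
      linarith
    have hub : (f - g) (x - y) ≤ ‖f - g‖ * (1 + δ) := by
      calc (f - g) (x - y) ≤ ‖f - g‖ * ‖x - y‖ := key _ _
        _ ≤ ‖f - g‖ * (1 + δ) := mul_le_mul_of_nonneg_left hmy (norm_nonneg _)
    have hN : 2 - 4 * δ ≤ ‖f - g‖ * (1 + δ) := hval.trans hub
    nlinarith [norm_nonneg (f - g), hδ0.le]
end

section
/- If a Banach space X is ASQ, then X is WASQ: for every x ∈ S_X there exists a sequence (y_n) ⊂ B_X such that ‖x + y_n‖ → 1, ‖x − y_n‖ → 1, ‖y_n‖ → 1, and y_n → 0 weakly. -/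
open Filter Topology

noncomputable section ASQaux

open scoped Classical

namespace ASQaux

variable {X : Type*} [NormedAddCommGroup X] [NormedSpace ℝ X]

def coef : Fin 3 → ℝ := ![-1, 0, 1]

lemma fin3 (i : Fin 3) : i = 0 ∨ i = 1 ∨ i = 2 := by fin_cases i <;> simp

def eps (n : ℕ) : ℝ := (1/2)^(n+1)

lemma eps_pos (n : ℕ) : 0 < eps n := by unfold eps; positivity

variable (x : X)

def Sset (n : ℕ) (prev : ℕ → X) : Finset X :=
  insert x ((Finset.image
    (fun c : Fin n → Fin 3 =>
      ‖∑ k : Fin n, coef (c k) • prev k‖⁻¹ • ∑ k : Fin n, coef (c k) • prev k)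
    Finset.univ).filter (fun v => ‖v‖ = 1))

lemma Sset_norm (hx : ‖x‖ = 1) (n : ℕ) (prev : ℕ → X) : ∀ v ∈ Sset x n prev, ‖v‖ = 1 := by
  intro v hv
  rcases Finset.mem_insert.1 hv with rfl | hv
  · exact hx
  · exact (Finset.mem_filter.1 hv).2

def pick (hASQ : IsASQ X) (hx : ‖x‖ = 1) (n : ℕ) (prev : ℕ → X) : X :=
  (hASQ (Sset x n prev) (Sset_norm x hx n prev) (eps n) (eps_pos n)).choose

lemma pick_norm (hASQ : IsASQ X) (hx : ‖x‖ = 1) (n : ℕ) (prev : ℕ → X) : ‖pick x hASQ hx n prev‖ = 1 :=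
  (hASQ (Sset x n prev) (Sset_norm x hx n prev) (eps n) (eps_pos n)).choose_spec.1

lemma pick_prop (hASQ : IsASQ X) (hx : ‖x‖ = 1) (n : ℕ) (prev : ℕ → X) :
    ∀ v ∈ Sset x n prev, ‖v + pick x hASQ hx n prev‖ ≤ 1 + eps n ∧
      ‖v - pick x hASQ hx n prev‖ ≤ 1 + eps n :=
  (hASQ (Sset x n prev) (Sset_norm x hx n prev) (eps n) (eps_pos n)).choose_spec.2

def g (hASQ : IsASQ X) (hx : ‖x‖ = 1) : ℕ → ℕ → X
  | 0 => fun _ => 0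
  | n+1 => Function.update (g hASQ hx n) n (pick x hASQ hx n (g hASQ hx n))

def Y (hASQ : IsASQ X) (hx : ‖x‖ = 1) (n : ℕ) : X := pick x hASQ hx n (g x hASQ hx n)

lemma g_eq (hASQ : IsASQ X) (hx : ‖x‖ = 1) : ∀ n k, k < n → g x hASQ hx n k = Y x hASQ hx k := by
  intro n
  induction n with
  | zero => intro k hk; omega
  | succ n ih =>
    intro k hk
    rcases Nat.lt_succ_iff_lt_or_eq.1 hk with hk' | rfl
    · rw [g, Function.update_of_ne (by omega)]
      exact ih k hk'
    · rw [g, Function.update_self]; rfl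

lemma Y_norm (hASQ : IsASQ X) (hx : ‖x‖ = 1) (n : ℕ) : ‖Y x hASQ hx n‖ = 1 := pick_norm _ _ _ _ _

lemma Y_prop (hASQ : IsASQ X) (hx : ‖x‖ = 1) (n : ℕ) : ∀ v ∈ Sset x n (g x hASQ hx n),
    ‖v + Y x hASQ hx n‖ ≤ 1 + eps n ∧ ‖v - Y x hASQ hx n‖ ≤ 1 + eps n :=
  pick_prop _ _ _ _ _

lemma x_prop (hASQ : IsASQ X) (hx : ‖x‖ = 1) (n : ℕ) :
    ‖x + Y x hASQ hx n‖ ≤ 1 + eps n ∧ ‖x - Y x hASQ hx n‖ ≤ 1 + eps n :=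
  Y_prop x hASQ hx n x (Finset.mem_insert_self _ _)

/-- Key step lemma. -/
lemma add_bound (n : ℕ) (u w : X) (hu : ‖u‖ ≤ 3 - (1/2:ℝ)^n) (hw : ‖w‖ = 1)
    (hsp : 1 ≤ ‖u‖ → ‖‖u‖⁻¹ • u + w‖ ≤ 1 + eps n) :
    ‖u + w‖ ≤ 3 - (1/2:ℝ)^(n+1) := by
  have hpow : (1/2:ℝ)^(n+1) = (1/2)^n * (1/2) := pow_succ _ _
  have hpow1 : (1/2:ℝ)^(n+1) ≤ 1 := by
    apply pow_le_one₀ <;> norm_num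
  by_cases h1 : 1 ≤ ‖u‖
  · have hs := hsp h1
    have hne : ‖u‖ ≠ 0 := by positivity
    have key : u + w = (‖u‖⁻¹ • u + w) + (1 - ‖u‖⁻¹) • u := by
      rw [sub_smul, one_smul]; abel
    have hnn : 0 ≤ 1 - ‖u‖⁻¹ := by
      have : ‖u‖⁻¹ ≤ 1 := by
        rw [inv_le_one_iff₀]; right; exact h1
      linarith
    have hrest : ‖(1 - ‖u‖⁻¹) • u‖ = ‖u‖ - 1 := by
      rw [norm_smul, Real.norm_eq_abs, abs_of_nonneg hnn, sub_mul, one_mul,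
        inv_mul_cancel₀ hne]
    calc ‖u + w‖ ≤ ‖‖u‖⁻¹ • u + w‖ + ‖(1 - ‖u‖⁻¹) • u‖ := by
          rw [key]; exact norm_add_le _ _
      _ ≤ (1 + eps n) + (‖u‖ - 1) := by rw [hrest]; linarith
      _ ≤ 3 - (1/2:ℝ)^(n+1) := by
          have : eps n = (1/2:ℝ)^(n+1) := rfl
          rw [this]
          nlinarith [pow_pos (by norm_num : (0:ℝ) < 1/2) n]
  · push_neg at h1
    calc ‖u + w‖ ≤ ‖u‖ + ‖w‖ := norm_add_le _ _
      _ ≤ 3 - (1/2:ℝ)^(n+1) := by rw [hw]; linarith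

lemma sum_bound (hASQ : IsASQ X) (hx : ‖x‖ = 1) : ∀ (n : ℕ) (c : Fin n → Fin 3),
    ‖∑ k : Fin n, coef (c k) • Y x hASQ hx ↑k‖ ≤ 3 - (1/2:ℝ)^n := by
  intro n
  induction n with
  | zero => intro c; simp
  | succ n ih =>
    intro c
    rw [Fin.sum_univ_castSucc]
    simp only [Fin.coe_castSucc]
    set u : X := ∑ k : Fin n, coef (c k.castSucc) • Y x hASQ hx ↑k with hu_def
    have hu : ‖u‖ ≤ 3 - (1/2:ℝ)^n := ih (fun k => c k.castSucc)
    have hmem : 1 ≤ ‖u‖ → ‖u‖⁻¹ • u ∈ Sset x n (g x hASQ hx n) := by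
      intro h1
      apply Finset.mem_insert_of_mem
      rw [Finset.mem_filter]
      constructor
      · rw [Finset.mem_image]
        refine ⟨fun k => c k.castSucc, Finset.mem_univ _, ?_⟩
        have : ∀ k : Fin n, coef (c k.castSucc) • g x hASQ hx n ↑k
            = coef (c k.castSucc) • Y x hASQ hx ↑k := by
          intro k; rw [g_eq x hASQ hx n k k.isLt]
        rw [Finset.sum_congr rfl (fun k _ => this k)]
      · have hne : u ≠ 0 := by
          intro h0
          rw [h0, norm_zero] at h1; linarith
        exact norm_smul_inv_norm hne
    rcases fin3 (c (Fin.last n)) with hl | hl | hl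
    · rw [hl]
      have : coef 0 • Y x hASQ hx ↑(Fin.last n) = -(1:ℝ) • Y x hASQ hx n := by
        simp [coef]
      rw [this]
      apply add_bound n u _ hu
      · rw [norm_smul]; simp [Y_norm]
      · intro h1
        have hsp := (Y_prop x hASQ hx n _ (hmem h1)).2
        have : ‖u‖⁻¹ • u + -(1:ℝ) • Y x hASQ hx n = ‖u‖⁻¹ • u - Y x hASQ hx n := by
          simp [sub_eq_add_neg]
        rw [this]; exact hsp
    · rw [hl]
      have : coef 1 • Y x hASQ hx ↑(Fin.last n) = 0 := by simp [coef]
      rw [this, add_zero]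
      have hpow : (1/2:ℝ)^(n+1) ≤ (1/2:ℝ)^n := by
        apply pow_le_pow_of_le_one <;> norm_num
      linarith
    · rw [hl]
      have : coef 2 • Y x hASQ hx ↑(Fin.last n) = Y x hASQ hx n := by
        simp [coef]
      rw [this]
      apply add_bound n u _ hu (Y_norm x hASQ hx n)
      intro h1
      exact (Y_prop x hASQ hx n _ (hmem h1)).1

lemma sum_bound' (hASQ : IsASQ X) (hx : ‖x‖ = 1) (A : Finset ℕ) (σ : ℕ → ℝ) (hσ : ∀ k, σ k = 1 ∨ σ k = -1) :
    ‖∑ k ∈ A, σ k • Y x hASQ hx k‖ ≤ 3 := by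
  obtain ⟨n, hA⟩ := A.exists_nat_subset_range
  set d : ℕ → ℝ := fun k => if k ∈ A then σ k else 0 with hd
  have h1 : ∑ k ∈ A, σ k • Y x hASQ hx k = ∑ k ∈ Finset.range n, d k • Y x hASQ hx k := by
    rw [← Finset.sum_subset hA (fun k _ hk => by simp [hd, hk])]
    exact Finset.sum_congr rfl (fun k hk => by simp [hd, hk])
  set c : Fin n → Fin 3 := fun k => if d ↑k = -1 then 0 else if d ↑k = 1 then 2 else 1 with hc
  have hcoef : ∀ k : Fin n, coef (c k) = d ↑k := by
    intro k
    rcases hσ (k : ℕ) with hs | hs <;>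
    · by_cases hk : (k : ℕ) ∈ A <;> norm_num [hc, hd, hk, hs, coef, Matrix.cons_val_two, Matrix.tail_cons, Matrix.head_cons]
  have h2 : ∑ k ∈ Finset.range n, d k • Y x hASQ hx k
      = ∑ k : Fin n, coef (c k) • Y x hASQ hx ↑k := by
    rw [← Fin.sum_univ_eq_sum_range (fun k => d k • Y x hASQ hx k) n]
    exact Finset.sum_congr rfl (fun k _ => by rw [hcoef])
  rw [h1, h2]
  have := sum_bound x hASQ hx n c
  have hpos : (0:ℝ) < (1/2:ℝ)^n := by positivity
  linarith

end ASQaux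

end ASQaux

open ASQaux in
theorem stmt_8 (X : Type*) [NormedAddCommGroup X] [NormedSpace ℝ X] [CompleteSpace X]
    (h : IsASQ X) :
    ∀ x : X, ‖x‖ = 1 → ∃ y : ℕ → X, (∀ n, ‖y n‖ ≤ 1) ∧
      Tendsto (fun n => ‖x + y n‖) atTop (𝓝 1) ∧
      Tendsto (fun n => ‖x - y n‖) atTop (𝓝 1) ∧
      Tendsto (fun n => ‖y n‖) atTop (𝓝 1) ∧
      ∀ f : StrongDual ℝ X, Tendsto (fun n => f (y n)) atTop (𝓝 0) := by
  intro x hx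
  have heps : Tendsto (fun n : ℕ => eps n) atTop (𝓝 0) := by
    have h0 : Tendsto (fun n : ℕ => ((1:ℝ)/2)^n) atTop (𝓝 0) :=
      tendsto_pow_atTop_nhds_zero_of_lt_one (by norm_num) (by norm_num)
    have := h0.comp (tendsto_add_atTop_nat 1)
    simpa [eps, Function.comp_def] using this
  have hlow : ∀ n, (2:ℝ) ≤ ‖x + Y x h hx n‖ + ‖x - Y x h hx n‖ := by
    intro n
    have := norm_add_le (x + Y x h hx n) (x - Y x h hx n)
    have heq : (x + Y x h hx n) + (x - Y x h hx n) = (2:ℝ) • x := by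
      rw [two_smul]; abel
    rw [heq, norm_smul] at this
    simp [hx] at this
    linarith
  refine ⟨Y x h hx, fun n => le_of_eq (Y_norm x h hx n), ?_, ?_, ?_, ?_⟩
  · -- ‖x + y n‖ → 1
    apply tendsto_of_tendsto_of_tendsto_of_le_of_le
      (g := fun n : ℕ => 1 - eps n) (h := fun n : ℕ => 1 + eps n)
    · simpa using tendsto_const_nhds.sub heps
    · simpa using tendsto_const_nhds.add heps
    · intro n
      have h1 := (x_prop x h hx n).1
      have h2 := (x_prop x h hx n).2
      show 1 - eps n ≤ ‖x + Y x h hx n‖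
      linarith [hlow n]
    · intro n; show ‖x + Y x h hx n‖ ≤ 1 + eps n; exact (x_prop x h hx n).1
  · -- ‖x - y n‖ → 1
    apply tendsto_of_tendsto_of_tendsto_of_le_of_le
      (g := fun n : ℕ => 1 - eps n) (h := fun n : ℕ => 1 + eps n)
    · simpa using tendsto_const_nhds.sub heps
    · simpa using tendsto_const_nhds.add heps
    · intro n
      have h1 := (x_prop x h hx n).1
      have h2 := (x_prop x h hx n).2
      show 1 - eps n ≤ ‖x - Y x h hx n‖
      linarith [hlow n]
    · intro n; show ‖x - Y x h hx n‖ ≤ 1 + eps n; exact (x_prop x h hx n).2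
  · -- ‖y n‖ → 1
    have : (fun n => ‖Y x h hx n‖) = fun _ : ℕ => (1:ℝ) := by
      funext n; exact Y_norm x h hx n
    rw [this]; exact tendsto_const_nhds
  · -- weak nullity
    intro f
    rw [NormedAddCommGroup.tendsto_nhds_zero]
    intro δ hδ
    have hfin : {n : ℕ | δ ≤ |f (Y x h hx n)|}.Finite := by
      by_contra hinf
      rw [← Set.not_infinite, not_not] at hinf
      set N : ℕ := ⌈(3 * ‖f‖) / δ⌉₊ + 1 with hN
      obtain ⟨A, hAs, hAcard⟩ := hinf.exists_subset_card_eq N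
      set σ : ℕ → ℝ := fun k => if f (Y x h hx k) < 0 then -1 else 1 with hσdef
      have hσ : ∀ k, σ k = 1 ∨ σ k = -1 := by
        intro k; by_cases hk : f (Y x h hx k) < 0 <;> simp [hσdef, hk]
      have habs : ∀ k ∈ A, σ k * f (Y x h hx k) = |f (Y x h hx k)| := by
        intro k _
        by_cases hk : f (Y x h hx k) < 0
        · simp [hσdef, hk, abs_of_neg hk]
        · push_neg at hk
          simp [hσdef, not_lt.2 hk, abs_of_nonneg hk]
      have hsum : f (∑ k ∈ A, σ k • Y x h hx k) = ∑ k ∈ A, |f (Y x h hx k)| := by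
        rw [map_sum]
        refine Finset.sum_congr rfl (fun k hk => ?_)
        rw [map_smul]
        exact habs k hk
      have hge : (N : ℝ) * δ ≤ ∑ k ∈ A, |f (Y x h hx k)| := by
        have : ∀ k ∈ A, δ ≤ |f (Y x h hx k)| := fun k hk => hAs hk
        calc (N : ℝ) * δ = A.card • δ := by rw [hAcard]; simp [nsmul_eq_mul]
          _ ≤ ∑ k ∈ A, |f (Y x h hx k)| := Finset.card_nsmul_le_sum A _ δ this
      have hle : ∑ k ∈ A, |f (Y x h hx k)| ≤ 3 * ‖f‖ := by
        rw [← hsum]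
        calc f (∑ k ∈ A, σ k • Y x h hx k) ≤ |f (∑ k ∈ A, σ k • Y x h hx k)| :=
              le_abs_self _
          _ ≤ ‖f‖ * ‖∑ k ∈ A, σ k • Y x h hx k‖ := f.le_opNorm _
          _ ≤ ‖f‖ * 3 := by
              have := sum_bound' x h hx A σ hσ
              have h0 : (0:ℝ) ≤ ‖f‖ := norm_nonneg _
              nlinarith
          _ = 3 * ‖f‖ := by ring
      have hNgt : (3 * ‖f‖) / δ < (N : ℝ) := by
        rw [hN]
        push_cast
        have := Nat.le_ceil ((3 * ‖f‖) / δ)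
        linarith
      rw [div_lt_iff₀ hδ] at hNgt
      linarith
    have hcof : ∀ᶠ n in Filter.cofinite, n ∉ {n : ℕ | δ ≤ |f (Y x h hx n)|} :=
      Set.Finite.eventually_cofinite_notMem hfin
    rw [Nat.cofinite_eq_atTop] at hcof
    filter_upwards [hcof] with n hn
    simp only [Set.mem_setOf_eq, not_le] at hn
    simpa [Real.norm_eq_abs] using hn
end

section
/- For any sequence (X_i) of nontrivial Banach spaces, the c_0-sum c_0(X_i) is ASQ. -/
open Filter Topology
open scoped ENNReal

/-- The `c₀`-sum of a sequence of normed spaces, realized as the subspace of the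
`ℓ∞`-sum consisting of those elements `(x i)` with `‖x i‖ → 0`. -/
noncomputable def c0Sum (X : ℕ → Type*) [∀ i, NormedAddCommGroup (X i)] [∀ i, NormedSpace ℝ (X i)] :
    Submodule ℝ (lp X ∞) where
  carrier := {f | Tendsto (fun i => ‖(f : ∀ i, X i) i‖) atTop (𝓝 0)}
  add_mem' := by
    intro f g hf hg
    have hsum : Tendsto (fun i => ‖(f : ∀ i, X i) i‖ + ‖(g : ∀ i, X i) i‖) atTop (𝓝 0) := by
      simpa using hf.add hg
    refine squeeze_zero (fun i => norm_nonneg _) (fun i => ?_) hsum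
    simp only [lp.coeFn_add, Pi.add_apply]
    exact norm_add_le _ _
  zero_mem' := by
    simp only [Set.mem_setOf_eq, lp.coeFn_zero, Pi.zero_apply, norm_zero]
    exact tendsto_const_nhds
  smul_mem' := by
    intro c f hf
    have : Tendsto (fun i => ‖c‖ * ‖(f : ∀ i, X i) i‖) atTop (𝓝 0) := by
      simpa using hf.const_mul ‖c‖
    refine squeeze_zero (fun i => norm_nonneg _) (fun i => ?_) this
    simp only [lp.coeFn_smul, Pi.smul_apply, norm_smul, le_refl]

theorem stmt_10 (X : ℕ → Type*) [∀ i, NormedAddCommGroup (X i)] [∀ i, NormedSpace ℝ (X i)]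
    [∀ i, CompleteSpace (X i)] [∀ i, Nontrivial (X i)] :
    IsASQ (c0Sum X) := by
  intro S hS ε hε
  -- choose N such that for all i ≥ N and all f ∈ S, ‖f i‖ ≤ ε
  have hev : ∀ᶠ i in atTop, ∀ f ∈ S, ‖((f : lp X ∞) : ∀ i, X i) i‖ ≤ ε := by
    rw [eventually_all_finset]
    intro f _
    have hf : Tendsto (fun i => ‖((f : lp X ∞) : ∀ i, X i) i‖) atTop (𝓝 0) := f.2
    exact (hf.eventually (eventually_le_nhds hε)).mono fun i hi => hi
  obtain ⟨n, hn⟩ := hev.exists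
  -- a unit vector in X n
  obtain ⟨v, hv⟩ := exists_norm_eq (X n) (le_of_lt one_pos)
  set y₀ : lp X ∞ := lp.single ∞ n v with hy₀
  have hy₀app : ∀ j, ‖(y₀ : ∀ i, X i) j‖ = if j = n then 1 else 0 := by
    intro j
    by_cases hj : j = n
    · subst hj; simp [hy₀, lp.single_apply_self, hv]
    · simp [hy₀, lp.single_apply_ne ∞ n v hj, hj]
  have hy₀mem : y₀ ∈ c0Sum X := by
    have : (fun i => ‖(y₀ : ∀ i, X i) i‖) =ᶠ[atTop] fun _ => (0 : ℝ) := by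
      filter_upwards [eventually_gt_atTop n] with i hi
      rw [hy₀app i, if_neg (by omega)]
    exact Tendsto.congr' this.symm tendsto_const_nhds
  have hy₀norm : ‖y₀‖ = 1 := by
    refine le_antisymm ?_ ?_
    · rw [lp.norm_eq_ciSup]
      refine ciSup_le fun i => ?_
      rw [hy₀app i]
      split <;> norm_num
    · have := (lp.isLUB_norm y₀).1 ⟨n, rfl⟩
      simpa [hy₀app n] using this
  refine ⟨⟨y₀, hy₀mem⟩, hy₀norm, fun f hf => ?_⟩
  have hfn : ‖(f : lp X ∞)‖ = 1 := hS f hf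
  have key : ∀ (g : lp X ∞), (∀ i, ‖g i‖ ≤ ‖((f : lp X ∞) : ∀ i, X i) i + (y₀ : ∀ i, X i) i‖ ∨ True) → True := fun _ _ => trivial
  have bound : ∀ (s : ℝ) (hs : s = 1 ∨ s = -1), ‖(f : lp X ∞) + s • y₀‖ ≤ 1 + ε := by
    intro s hs
    rw [lp.norm_eq_ciSup]
    refine ciSup_le fun i => ?_
    have : ((f : lp X ∞) + s • y₀ : lp X ∞) i
        = ((f : lp X ∞) : ∀ i, X i) i + s • (y₀ : ∀ i, X i) i := rfl
    rw [this]
    by_cases hi : i = n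
    · subst hi
      refine (norm_add_le _ _).trans ?_
      have h1 : ‖((f : lp X ∞) : ∀ j, X j) i‖ ≤ ε := hn f hf
      have h2 : ‖s • (y₀ : ∀ j, X j) i‖ = 1 := by
        rw [norm_smul, hy₀app i, if_pos rfl]
        rcases hs with h | h <;> simp [h]
      rw [h2]; linarith
    · have h2 : s • (y₀ : ∀ i, X i) i = 0 := by
        have : ‖(y₀ : ∀ i, X i) i‖ = 0 := by rw [hy₀app i, if_neg hi]
        rw [norm_eq_zero] at this
        rw [this, smul_zero]
      rw [h2, add_zero]
      have := lp.norm_apply_le_norm (by norm_num) (f : lp X ∞) i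
      rw [hfn] at this
      linarith
  constructor
  · have : ((f + ⟨y₀, hy₀mem⟩ : c0Sum X) : lp X ∞) = (f : lp X ∞) + (1 : ℝ) • y₀ := by
      simp
    calc ‖f + (⟨y₀, hy₀mem⟩ : c0Sum X)‖ = ‖(f : lp X ∞) + (1:ℝ) • y₀‖ := by
          rw [← this]; rfl
      _ ≤ 1 + ε := bound 1 (Or.inl rfl)
  · have : ((f - ⟨y₀, hy₀mem⟩ : c0Sum X) : lp X ∞) = (f : lp X ∞) + (-1 : ℝ) • y₀ := by
      simp [sub_eq_add_neg]
    calc ‖f - (⟨y₀, hy₀mem⟩ : c0Sum X)‖ = ‖(f : lp X ∞) + (-1:ℝ) • y₀‖ := by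
          rw [← this]; rfl
      _ ≤ 1 + ε := bound (-1) (Or.inr rfl)
end

section
/- The space X = {f ∈ C[0,1] : f(0) = −f(1)} with the supremum norm is LASQ but not ASQ. -/
/-- The subspace `{f ∈ C[0,1] : f 0 = -f 1}` of `C[0,1]`. -/
def X01 : Submodule ℝ C(Set.Icc (0:ℝ) 1, ℝ) where
  carrier := {f | f ⟨0, by norm_num⟩ = - f ⟨1, by norm_num⟩}
  add_mem' := by
    intro f g hf hg
    simp only [Set.mem_setOf_eq, ContinuousMap.add_apply] at *
    rw [hf, hg]; ring
  zero_mem' := by simp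
  smul_mem' := by
    intro c f hf
    simp only [Set.mem_setOf_eq, ContinuousMap.smul_apply] at *
    rw [hf, smul_neg]

/-- A Banach space is locally almost square (LASQ). -/
def IsLASQ (X : Type*) [NormedAddCommGroup X] [NormedSpace ℝ X] : Prop :=
  ∀ x : X, ‖x‖ = 1 → ∀ ε : ℝ, 0 < ε →
    ∃ y : X, ‖y‖ = 1 ∧ ‖x + y‖ ≤ 1 + ε ∧ ‖x - y‖ ≤ 1 + ε

noncomputable section

abbrev I01 := Set.Icc (0:ℝ) 1

def z0 : I01 := ⟨0, by norm_num⟩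
def z1 : I01 := ⟨1, by norm_num⟩

lemma abs_add_abs_le_max (a b : ℝ) : |a| + |b| ≤ max |a+b| |a-b| := by
  rcases abs_cases a with ⟨h1,h2⟩|⟨h1,h2⟩ <;> rcases abs_cases b with ⟨h3,h4⟩|⟨h3,h4⟩ <;>
    rw [le_max_iff]
  · left; rw [abs_of_nonneg (by linarith : (0:ℝ) ≤ a + b)]; linarith
  · right; rw [abs_of_nonneg (by linarith : (0:ℝ) ≤ a - b)]; linarith
  · right; rw [abs_of_nonpos (by linarith : a - b ≤ 0)]; linarith
  · left; rw [abs_of_nonpos (by linarith : a + b ≤ 0)]; linarith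

/-- the tent bump of radius r at m -/
def bump (m r : ℝ) : C(I01, ℝ) :=
  ⟨fun t => max 0 (1 - |(t:ℝ) - m|/r), by fun_prop⟩

lemma bump_nonneg (m r : ℝ) (t : I01) : 0 ≤ bump m r t := le_max_left _ _

lemma bump_le_one (m r : ℝ) (hr : 0 < r) (t : I01) : bump m r t ≤ 1 := by
  apply max_le (by norm_num)
  have : 0 ≤ |(t:ℝ) - m|/r := div_nonneg (abs_nonneg _) hr.le
  linarith

lemma bump_eq_zero (m r : ℝ) (hr : 0 < r) (t : I01) (ht : r < |(t:ℝ) - m|) :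
    bump m r t = 0 := by
  apply max_eq_left
  have : 1 < |(t:ℝ) - m|/r := (one_lt_div hr).mpr ht
  linarith

lemma key (f : C(I01,ℝ)) (hf : ‖f‖ = 1) (ε : ℝ) (hε : 0 < ε)
    (m r : ℝ) (hr : 0 < r) (hm0 : r < m) (hm1 : m + r < 1)
    (hsmall : ∀ t : I01, |(t:ℝ) - m| ≤ r → |f t| ≤ ε) :
    ∃ g : C(I01,ℝ), g z0 = - g z1 ∧ ‖g‖ = 1 ∧ ‖f+g‖ ≤ 1+ε ∧ ‖f-g‖ ≤ 1+ε := by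
  have hm : (m : ℝ) ∈ I01 := ⟨by linarith, by linarith⟩
  refine ⟨bump m r, ?_, ?_, ?_, ?_⟩
  · have h0 : bump m r z0 = 0 := bump_eq_zero m r hr z0 (by
      simp only [z0]; rw [abs_of_nonpos (by linarith)]; linarith)
    have h1 : bump m r z1 = 0 := bump_eq_zero m r hr z1 (by
      simp only [z1]; rw [abs_of_nonneg (by linarith)]; linarith)
    rw [h0, h1]; ring
  · refine le_antisymm ?_ ?_
    · rw [ContinuousMap.norm_le _ (by norm_num)]
      intro t
      rw [Real.norm_eq_abs, abs_of_nonneg (bump_nonneg m r t)]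
      exact bump_le_one m r hr t
    · have := (bump m r).norm_coe_le_norm ⟨m, hm⟩
      have hv : bump m r ⟨m, hm⟩ = 1 := by
        simp [bump, ContinuousMap.coe_mk]
      rw [hv] at this
      simpa using this
  all_goals {
    rw [ContinuousMap.norm_le _ (by linarith)]
    intro t
    rcases le_or_gt (|(t:ℝ) - m|) r with h | h
    · have h1 := hsmall t h
      have h2 := bump_le_one m r hr t
      have h3 := bump_nonneg m r t
      simp only [ContinuousMap.add_apply, ContinuousMap.sub_apply, Real.norm_eq_abs]
      have := abs_le.mp h1
      rw [abs_le]; constructor <;> linarith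
    · have h0 : bump m r t = 0 := bump_eq_zero m r hr t h
      have h1 : ‖f t‖ ≤ 1 := hf ▸ f.norm_coe_le_norm t
      simp only [ContinuousMap.add_apply, ContinuousMap.sub_apply, h0, add_zero, sub_zero]
      linarith }

/-- existence of good companion in ambient space -/
lemma lasq_aux (f : C(I01,ℝ)) (hmem : f z0 = - f z1) (hf : ‖f‖ = 1)
    (ε : ℝ) (hε : 0 < ε) :
    ∃ g : C(I01,ℝ), g z0 = - g z1 ∧ ‖g‖ = 1 ∧ ‖f+g‖ ≤ 1+ε ∧ ‖f-g‖ ≤ 1+ε := by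
  -- find a zero of f
  have hrange : (0:ℝ) ∈ Set.range f := by
    rcases le_total (f z0) 0 with h | h
    · exact intermediate_value_univ z0 z1 (map_continuous f) ⟨h, by linarith⟩
    · exact intermediate_value_univ z1 z0 (map_continuous f) ⟨by linarith, h⟩
  obtain ⟨t0, ht0⟩ := hrange
  obtain ⟨δ, hδ, hδ'⟩ := Metric.continuousAt_iff.mp (map_continuous f).continuousAt ε hε
  have hs : ∀ t : I01, |(t:ℝ) - (t0:ℝ)| < δ → |f t| ≤ ε := by
    intro t ht
    have : dist t t0 < δ := by rwa [Subtype.dist_eq, Real.dist_eq]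
    have := hδ' this
    rw [ht0, Real.dist_eq, sub_zero] at this
    exact this.le
  set r : ℝ := min δ (1/2) / 8 with hr_def
  have hr : 0 < r := by positivity
  have hr1 : r ≤ 1/16 := by
    have := min_le_right δ (1/2); rw [hr_def]; linarith
  have hr2 : 8 * r ≤ δ := by
    have := min_le_left δ (1/2); rw [hr_def]; linarith
  have ht01 : (0:ℝ) ≤ t0 := t0.2.1
  have ht02 : (t0:ℝ) ≤ 1 := t0.2.2
  rcases le_or_gt (t0:ℝ) (1/2) with hle | hgt
  · refine key f hf ε hε ((t0:ℝ) + 2*r) r hr (by linarith) (by linarith) ?_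
    intro t ht
    apply hs
    have : (t:ℝ) - t0 = ((t:ℝ) - ((t0:ℝ) + 2*r)) + 2*r := by ring
    rw [this]
    calc |((t:ℝ) - ((t0:ℝ) + 2*r)) + 2*r| ≤ |(t:ℝ) - ((t0:ℝ) + 2*r)| + |2*r| := abs_add_le _ _
      _ ≤ r + 2*r := by rw [abs_of_nonneg (by positivity : (0:ℝ) ≤ 2*r)]; linarith
      _ < δ := by linarith
  · refine key f hf ε hε ((t0:ℝ) - 2*r) r hr (by linarith) (by linarith) ?_
    intro t ht
    apply hs
    have : (t:ℝ) - t0 = ((t:ℝ) - ((t0:ℝ) - 2*r)) + (-(2*r)) := by ring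
    rw [this]
    calc |((t:ℝ) - ((t0:ℝ) - 2*r)) + (-(2*r))| ≤ |(t:ℝ) - ((t0:ℝ) - 2*r)| + |(-(2*r))| := abs_add_le _ _
      _ ≤ r + 2*r := by rw [abs_neg, abs_of_nonneg (by positivity : (0:ℝ) ≤ 2*r)]; linarith
      _ < δ := by linarith

def uu : C(I01, ℝ) := ⟨fun t => 1 - 2*(t:ℝ), by fun_prop⟩
def vv : C(I01, ℝ) := ⟨fun t => 1 - |2*(t:ℝ) - 1|, by fun_prop⟩

lemma uu_mem : uu z0 = - uu z1 := by norm_num [uu, z0, z1]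
lemma vv_mem : vv z0 = - vv z1 := by norm_num [vv, z0, z1]

lemma uu_norm : ‖uu‖ = 1 := by
  refine le_antisymm ?_ ?_
  · rw [ContinuousMap.norm_le _ (by norm_num)]
    intro t
    have h1 := t.2.1; have h2 := t.2.2
    rw [Real.norm_eq_abs, abs_le]
    constructor <;> simp [uu] <;> linarith
  · have h := uu.norm_coe_le_norm z0
    have : uu z0 = 1 := by norm_num [uu, z0]
    rw [this] at h; simpa using h

lemma vv_norm : ‖vv‖ = 1 := by
  refine le_antisymm ?_ ?_
  · rw [ContinuousMap.norm_le _ (by norm_num)]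
    intro t
    rw [Real.norm_eq_abs, abs_le]
    have := abs_nonneg (2*(t:ℝ) - 1)
    have h1 := t.2.1; have h2 := t.2.2
    have habs : |2*(t:ℝ) - 1| ≤ 1 := by rw [abs_le]; constructor <;> linarith
    constructor <;> simp [vv] <;> linarith
  · have h := vv.norm_coe_le_norm ⟨1/2, by norm_num⟩
    have : vv ⟨1/2, by norm_num⟩ = 1 := by norm_num [vv]
    rw [this] at h; simpa using h

end

theorem stmt_13 : IsLASQ X01 ∧ ¬ IsASQ X01 := by
  constructor
  · intro x hx ε hε
    have hmem : (x : C(I01,ℝ)) z0 = - (x : C(I01,ℝ)) z1 := x.2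
    obtain ⟨g, hg0, hg1, hgp, hgm⟩ := lasq_aux (x : C(I01,ℝ)) hmem hx ε hε
    exact ⟨⟨g, hg0⟩, hg1, hgp, hgm⟩
  · intro hASQ
    classical
    have hmemS : ∀ w ∈ ({⟨uu, uu_mem⟩, ⟨vv, vv_mem⟩} : Finset X01), ‖w‖ = 1 := by
      intro w hw
      rcases Finset.mem_insert.mp hw with h | h
      · rw [h]; exact uu_norm
      · rw [Finset.mem_singleton.mp h]; exact vv_norm
    obtain ⟨y, hy1, hy2⟩ := hASQ _ hmemS (1/4) (by norm_num)
    have hu := hy2 ⟨uu, uu_mem⟩ (Finset.mem_insert_self _ _)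
    have hv := hy2 ⟨vv, vv_mem⟩
      (Finset.mem_insert.mpr (Or.inr (Finset.mem_singleton_self _)))
    set w : C(I01, ℝ) := (y : C(I01, ℝ)) with hw_def
    have hup : ‖uu + w‖ ≤ 1 + 1/4 := hu.1
    have hum : ‖uu - w‖ ≤ 1 + 1/4 := hu.2
    have hvp : ‖vv + w‖ ≤ 1 + 1/4 := hv.1
    have hvm : ‖vv - w‖ ≤ 1 + 1/4 := hv.2
    have hbound : ∀ t : I01, |w t| ≤ 3/4 := by
      intro t
      have huw : |uu t| + |w t| ≤ 5/4 := by
        refine (abs_add_abs_le_max _ _).trans (max_le ?_ ?_)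
        · have := (uu + w).norm_coe_le_norm t
          simp only [ContinuousMap.add_apply, Real.norm_eq_abs] at this
          linarith
        · have := (uu - w).norm_coe_le_norm t
          simp only [ContinuousMap.sub_apply, Real.norm_eq_abs] at this
          linarith
      have hvw : |vv t| + |w t| ≤ 5/4 := by
        refine (abs_add_abs_le_max _ _).trans (max_le ?_ ?_)
        · have := (vv + w).norm_coe_le_norm t
          simp only [ContinuousMap.add_apply, Real.norm_eq_abs] at this
          linarith
        · have := (vv - w).norm_coe_le_norm t
          simp only [ContinuousMap.sub_apply, Real.norm_eq_abs] at this
          linarith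
      rcases le_or_gt (1/2) (|uu t|) with h | h
      · linarith
      · have habs : |2*(t:ℝ) - 1| < 1/2 := by
          have : uu t = 1 - 2*(t:ℝ) := rfl
          rw [this] at h
          have : |2*(t:ℝ) - 1| = |1 - 2*(t:ℝ)| := abs_sub_comm _ _
          rw [this]; exact h
        have hvt : vv t = 1 - |2*(t:ℝ) - 1| := rfl
        have : (1:ℝ)/2 ≤ |vv t| := by
          rw [hvt, abs_of_nonneg (by linarith [abs_nonneg (2*(t:ℝ) - 1)])]
          linarith
        linarith
    have hwle : ‖w‖ ≤ 3/4 := by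
      rw [ContinuousMap.norm_le _ (by norm_num)]
      intro t
      rw [Real.norm_eq_abs]
      exact hbound t
    have : ‖w‖ = 1 := hy1
    linarith
end

section
/- Let X be (L)ASQ and let Y be an almost isometric ideal in X. Then Y is (L)ASQ. -/
/-- `Y` is an almost isometric ideal (ai-ideal) in `X`: for every finite-dimensional
subspace `E ⊆ X` and every `ε > 0` there is a linear `u : E → Y` fixing `E ∩ Y`
which is an `ε`-isometry. -/
def IsAiIdeal {X : Type*} [NormedAddCommGroup X] [NormedSpace ℝ X]
    (Y : Submodule ℝ X) : Prop :=
  ∀ E : Submodule ℝ X, FiniteDimensional ℝ E → ∀ ε : ℝ, 0 < ε →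
    ∃ u : E →ₗ[ℝ] Y, (∀ e : E, (e : X) ∈ Y → ((u e : X) = (e : X))) ∧
      ∀ e : E, (1 + ε)⁻¹ * ‖(e : X)‖ ≤ ‖(u e : X)‖ ∧ ‖(u e : X)‖ ≤ (1 + ε) * ‖(e : X)‖

set_option maxHeartbeats 1000000 in
lemma key_s14 {X : Type*} [NormedAddCommGroup X] [NormedSpace ℝ X]
    (Y : Submodule ℝ X) (hY : IsAiIdeal Y) (S : Finset Y) (z : X) (hz : ‖z‖ = 1)
    (δ : ℝ) (hδ : 0 < δ)
    (hbound : ∀ x ∈ S, ‖(x : X) + z‖ ≤ 1 + δ ∧ ‖(x : X) - z‖ ≤ 1 + δ) :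
    ∃ y : Y, ‖y‖ = 1 ∧ ∀ x ∈ S,
      ‖x + y‖ ≤ (1 + δ) * (1 + δ) + δ ∧ ‖x - y‖ ≤ (1 + δ) * (1 + δ) + δ := by
  classical
  set s : Set X := insert z ((↑) '' (S : Set Y)) with hs
  have hsfin : s.Finite := (S.finite_toSet.image _).insert z
  have hFD : FiniteDimensional ℝ (Submodule.span ℝ s) :=
    FiniteDimensional.span_of_finite ℝ hsfin
  obtain ⟨u, hfix, hbd⟩ := hY (Submodule.span ℝ s) hFD δ hδ
  have hδ1 : (0:ℝ) < 1 + δ := by linarith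
  have hinv : (1 + δ)⁻¹ * (1 + δ) = 1 := inv_mul_cancel₀ (ne_of_gt hδ1)
  have hzE : z ∈ Submodule.span ℝ s := Submodule.subset_span (Set.mem_insert _ _)
  set ze : Submodule.span ℝ s := ⟨z, hzE⟩ with hze
  set w : Y := u ze with hw
  have hwlb : (1 + δ)⁻¹ ≤ ‖(w : X)‖ := by
    have := (hbd ze).1
    simpa [hze, hz] using this
  have hwub : ‖(w : X)‖ ≤ 1 + δ := by
    have := (hbd ze).2
    simpa [hze, hz] using this
  have hwnorm : ‖w‖ = ‖(w : X)‖ := rfl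
  have hwpos : 0 < ‖w‖ := lt_of_lt_of_le (inv_pos.mpr hδ1) (hwnorm ▸ hwlb)
  have habs : |1 - ‖w‖| ≤ δ := by
    rw [abs_le, hwnorm]
    constructor
    · linarith
    · nlinarith [hwlb]
  set y : Y := ‖w‖⁻¹ • w with hy
  have hyn : ‖y‖ = 1 := by
    rw [hy, norm_smul, norm_inv, norm_norm, inv_mul_cancel₀ (ne_of_gt hwpos)]
  have hyw : ‖y - w‖ ≤ δ := by
    have h1 : y - w = (‖w‖⁻¹ - 1) • w := by rw [sub_smul, one_smul, hy]
    have h2 : ‖y - w‖ = |1 - ‖w‖| := by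
      rw [h1, norm_smul, Real.norm_eq_abs,
        show |‖w‖⁻¹ - 1| * ‖w‖ = |(‖w‖⁻¹ - 1) * ‖w‖| from by
          rw [abs_mul, abs_of_nonneg (norm_nonneg w)],
        sub_mul, inv_mul_cancel₀ (ne_of_gt hwpos), one_mul]
    rw [h2]; exact habs
  refine ⟨y, hyn, ?_⟩
  intro x hx
  have hxE : (x : X) ∈ Submodule.span ℝ s :=
    Submodule.subset_span (Set.mem_insert_iff.mpr (Or.inr ⟨x, hx, rfl⟩))
  set xe : Submodule.span ℝ s := ⟨(x : X), hxE⟩ with hxe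
  have hux : u xe = x := Subtype.ext (hfix xe x.2)
  have hsum : ‖x + w‖ ≤ (1 + δ) * (1 + δ) := by
    have h := (hbd (xe + ze)).2
    rw [map_add, hux] at h
    have hco : ((xe + ze : Submodule.span ℝ s) : X) = (x : X) + z := by
      simp [hxe, hze]
    rw [hco] at h
    calc ‖x + w‖ = ‖((x + w : Y) : X)‖ := (Submodule.norm_coe _).symm
      _ ≤ (1 + δ) * ‖(x : X) + z‖ := h
      _ ≤ (1 + δ) * (1 + δ) :=
          mul_le_mul_of_nonneg_left (hbound x hx).1 (le_of_lt hδ1)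
  have hdiff : ‖x - w‖ ≤ (1 + δ) * (1 + δ) := by
    have h := (hbd (xe - ze)).2
    rw [map_sub, hux] at h
    have hco : ((xe - ze : Submodule.span ℝ s) : X) = (x : X) - z := by
      simp [hxe, hze]
    rw [hco] at h
    calc ‖x - w‖ = ‖((x - w : Y) : X)‖ := (Submodule.norm_coe _).symm
      _ ≤ (1 + δ) * ‖(x : X) - z‖ := h
      _ ≤ (1 + δ) * (1 + δ) :=
          mul_le_mul_of_nonneg_left (hbound x hx).2 (le_of_lt hδ1)
  constructor
  · calc ‖x + y‖ = ‖(x + w) + (y - w)‖ := by congr 1; abel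
      _ ≤ ‖x + w‖ + ‖y - w‖ := norm_add_le _ _
      _ ≤ (1 + δ) * (1 + δ) + δ := add_le_add hsum hyw
  · calc ‖x - y‖ = ‖(x - w) + (w - y)‖ := by congr 1; abel
      _ ≤ ‖x - w‖ + ‖w - y‖ := norm_add_le _ _
      _ ≤ (1 + δ) * (1 + δ) + δ := by
          rw [norm_sub_rev w y]; exact add_le_add hdiff hyw

theorem stmt_14 (X : Type*) [NormedAddCommGroup X] [NormedSpace ℝ X] [CompleteSpace X]
    (Y : Submodule ℝ X) (hY : IsAiIdeal Y) :
    (IsASQ X → IsASQ Y) ∧ (IsLASQ X → IsLASQ Y) := by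
  constructor
  · intro hX S hS ε hε
    set δ : ℝ := min ε 1 / 5 with hδdef
    have hδ : 0 < δ := div_pos (lt_min hε one_pos) (by norm_num)
    have hδε : δ ≤ ε / 5 := div_le_div_of_nonneg_right (min_le_left ε 1) (by norm_num)
    have hδ1 : δ ≤ 1 / 5 := div_le_div_of_nonneg_right (min_le_right ε 1) (by norm_num)
    classical
    obtain ⟨z, hz, hzb⟩ := hX (S.image ((↑) : Y → X))
      (by
        intro x hx
        obtain ⟨x', hx', rfl⟩ := Finset.mem_image.mp hx
        rw [Submodule.norm_coe]
        exact hS x' hx') δ hδ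
    obtain ⟨y, hyn, hyb⟩ := key_s14 Y hY S z hz δ hδ (by
      intro x hx
      exact hzb (x : X) (Finset.mem_image_of_mem _ hx))
    refine ⟨y, hyn, fun x hx => ?_⟩
    have h := hyb x hx
    have hfin : (1 + δ) * (1 + δ) + δ ≤ 1 + ε := by nlinarith
    exact ⟨h.1.trans hfin, h.2.trans hfin⟩
  · intro hX x hx ε hε
    set δ : ℝ := min ε 1 / 5 with hδdef
    have hδ : 0 < δ := div_pos (lt_min hε one_pos) (by norm_num)
    have hδε : δ ≤ ε / 5 := div_le_div_of_nonneg_right (min_le_left ε 1) (by norm_num)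
    have hδ1 : δ ≤ 1 / 5 := div_le_div_of_nonneg_right (min_le_right ε 1) (by norm_num)
    obtain ⟨z, hz, hzb1, hzb2⟩ := hX (x : X) (by rw [Submodule.norm_coe]; exact hx) δ hδ
    obtain ⟨y, hyn, hyb⟩ := key_s14 Y hY {x} z hz δ hδ (by
      intro x' hx'
      rw [Finset.mem_singleton] at hx'
      subst hx'
      exact ⟨hzb1, hzb2⟩)
    have h := hyb x (Finset.mem_singleton_self x)
    have hfin : (1 + δ) * (1 + δ) + δ ≤ 1 + ε := by nlinarith
    exact ⟨y, hyn, h.1.trans hfin, h.2.trans hfin⟩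
end

section
/- A Banach space X is ASQ if and only if X ε-fails the intersection property for every 0 < ε < 1, i.e., for every 0 < ε < 1, sup over finite families x_1,…,x_n with ‖x_i‖ < 1 of inf over y with ε < ‖y‖ ≤ 1 of max_i ‖x_i − y‖ equals 1. -/
/-- The index `γ(ε)`: the supremum over nonempty finite families of vectors of norm `< 1`
of the infimum over `y` with `ε < ‖y‖ ≤ 1` of `max_i ‖x_i - y‖`. -/
noncomputable def gammaIP (X : Type*) [NormedAddCommGroup X] [NormedSpace ℝ X]
    (ε : ℝ) : ℝ :=
  ⨆ S : {S : Finset X // S.Nonempty ∧ ∀ x ∈ S, ‖x‖ < 1},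
    ⨅ y : {y : X // ε < ‖y‖ ∧ ‖y‖ ≤ 1},
      S.1.sup' S.2.1 (fun x => ‖x - (y : X)‖)

section Aux

variable {X : Type*} [NormedAddCommGroup X] [NormedSpace ℝ X]

/-- In a nontrivial space, vectors of any nonnegative norm exist. -/
lemma exists_norm_eq_aux (x : X) (hx : x ≠ 0) {t : ℝ} (ht : 0 ≤ t) :
    ∃ y : X, ‖y‖ = t := by
  refine ⟨(t / ‖x‖) • x, ?_⟩
  rw [norm_smul, Real.norm_eq_abs, abs_div, abs_of_nonneg ht, abs_norm,
    div_mul_cancel₀]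
  exact norm_ne_zero_iff.mpr hx

/-- Under ASQ, for every admissible family there is an admissible `y` with all
distances at most `1`. -/
lemma asq_good_y (h : IsASQ X) {ε : ℝ} (hε0 : 0 < ε) (hε1 : ε < 1)
    (S : Finset X) (hS : S.Nonempty) (hlt : ∀ x ∈ S, ‖x‖ < 1) :
    ∃ y : X, (ε < ‖y‖ ∧ ‖y‖ ≤ 1) ∧ ∀ x ∈ S, ‖x - y‖ ≤ 1 := by
  classical
  set r := S.sup' hS (fun x => ‖x‖) with hr
  have hr1 : r < 1 := by
    rw [hr, Finset.sup'_lt_iff]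
    exact hlt
  have hrx : ∀ x ∈ S, ‖x‖ ≤ r := fun x hx => Finset.le_sup' (fun x => ‖x‖) hx
  set m := max r ε with hm
  have hm1 : m < 1 := max_lt hr1 hε1
  set δ := (1 - m) / 2 with hδ
  have hδ0 : 0 < δ := by simp only [hδ]; linarith
  set t := 1 - δ with htdef
  have htm : m < t := by simp only [htdef, hδ]; linarith
  have htε : ε < t := lt_of_le_of_lt (le_max_right r ε) htm
  have htr : r < t := lt_of_le_of_lt (le_max_left r ε) htm
  have ht0 : 0 < t := lt_trans hε0 htε
  have ht1 : t ≤ 1 := by simp only [htdef]; linarith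
  -- normalized family
  set U := (S.filter (fun x => x ≠ 0)).image (fun x => ‖x‖⁻¹ • x) with hU
  have hU1 : ∀ u ∈ U, ‖u‖ = 1 := by
    intro u hu
    rw [hU, Finset.mem_image] at hu
    obtain ⟨x, hx, rfl⟩ := hu
    have hx0 : x ≠ 0 := (Finset.mem_filter.mp hx).2
    rw [norm_smul, Real.norm_eq_abs, abs_inv, abs_norm,
      inv_mul_cancel₀ (norm_ne_zero_iff.mpr hx0)]
  obtain ⟨y, hy1, hy2⟩ := h U hU1 δ hδ0
  refine ⟨t • y, ⟨?_, ?_⟩, ?_⟩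
  · rw [norm_smul, Real.norm_eq_abs, abs_of_pos ht0, hy1, mul_one]; exact htε
  · rw [norm_smul, Real.norm_eq_abs, abs_of_pos ht0, hy1, mul_one]; exact ht1
  · intro x hx
    by_cases hx0 : x = 0
    · subst hx0
      rw [zero_sub, norm_neg, norm_smul, Real.norm_eq_abs, abs_of_pos ht0, hy1, mul_one]
      exact ht1
    · set u := ‖x‖⁻¹ • x with hu
      have hux : (‖x‖ : ℝ) • u = x := by
        rw [hu, smul_smul, mul_inv_cancel₀ (norm_ne_zero_iff.mpr hx0), one_smul]
      have huU : u ∈ U := by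
        rw [hU, Finset.mem_image]
        exact ⟨x, Finset.mem_filter.mpr ⟨hx, hx0⟩, rfl⟩
      have hkey : x - t • y = ‖x‖ • (u - y) + (‖x‖ - t) • y := by
        have hkey0 : (‖x‖ : ℝ) • u - t • y = ‖x‖ • (u - y) + (‖x‖ - t) • y := by
          module
        rw [hux] at hkey0
        exact hkey0
      have hxr : ‖x‖ ≤ r := hrx x hx
      have hxt : ‖x‖ ≤ t := le_of_lt (lt_of_le_of_lt hxr htr)
      have huy : ‖u - y‖ ≤ 1 + δ := (hy2 u huU).2
      calc ‖x - t • y‖ ≤ ‖(‖x‖ : ℝ) • (u - y)‖ + ‖((‖x‖ : ℝ) - t) • y‖ := by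
            rw [hkey]; exact norm_add_le _ _
        _ = ‖x‖ * ‖u - y‖ + (t - ‖x‖) := by
            rw [norm_smul, norm_smul, Real.norm_eq_abs, Real.norm_eq_abs,
              abs_norm, hy1, mul_one, abs_of_nonpos (by linarith)]
            ring
        _ ≤ ‖x‖ * (1 + δ) + (t - ‖x‖) := by
            have := norm_nonneg x
            nlinarith
        _ ≤ 1 := by
          have h1 : ‖x‖ ≤ 1 := le_of_lt (hlt x hx)
          have := norm_nonneg x
          simp only [htdef]
          nlinarith

end Aux

theorem stmt_18 (X : Type*) [NormedAddCommGroup X] [NormedSpace ℝ X] [CompleteSpace X] :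
    IsASQ X ↔ ∀ ε : ℝ, 0 < ε → ε < 1 → gammaIP X ε = 1 := by
  classical
  constructor
  · -- ASQ → gammaIP = 1
    intro h ε hε0 hε1
    obtain ⟨y₀, hy₀, -⟩ := h ∅ (by simp) 1 one_pos
    haveI hY : Nonempty {y : X // ε < ‖y‖ ∧ ‖y‖ ≤ 1} :=
      ⟨⟨y₀, by rw [hy₀]; exact ⟨hε1, le_refl 1⟩⟩⟩
    haveI hSne : Nonempty {S : Finset X // S.Nonempty ∧ ∀ x ∈ S, ‖x‖ < 1} :=
      ⟨⟨{0}, ⟨Finset.singleton_nonempty 0, by simp⟩⟩⟩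
    have hle : ∀ S : {S : Finset X // S.Nonempty ∧ ∀ x ∈ S, ‖x‖ < 1},
        (⨅ y : {y : X // ε < ‖y‖ ∧ ‖y‖ ≤ 1},
          S.1.sup' S.2.1 (fun x => ‖x - (y : X)‖)) ≤ 1 := by
      intro S
      obtain ⟨y, hy, hyS⟩ := asq_good_y h hε0 hε1 S.1 S.2.1 S.2.2
      refine ciInf_le_of_le ?_ ⟨y, hy⟩ (Finset.sup'_le _ _ hyS)
      refine ⟨0, ?_⟩
      rintro v ⟨z, rfl⟩
      obtain ⟨a, ha⟩ := S.2.1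
      exact le_trans (norm_nonneg _) (Finset.le_sup' (fun x => ‖x - (z : X)‖) ha)
    have hbdd : BddAbove (Set.range (fun S : {S : Finset X // S.Nonempty ∧ ∀ x ∈ S, ‖x‖ < 1} =>
        ⨅ y : {y : X // ε < ‖y‖ ∧ ‖y‖ ≤ 1}, S.1.sup' S.2.1 (fun x => ‖x - (y : X)‖))) := by
      refine ⟨1, ?_⟩
      rintro v ⟨S, rfl⟩
      exact hle S
    rw [gammaIP]
    apply le_antisymm
    · exact ciSup_le hle
    · -- 1 ≤ sup
      apply le_of_forall_pos_le_add
      intro η hη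
      set δ := min η 1 / 2 with hδdef
      have hδ0 : 0 < δ := by
        have : (0:ℝ) < min η 1 := lt_min hη one_pos
        simp only [hδdef]; linarith
      have hδ1 : δ < 1 := by
        have : min η 1 ≤ 1 := min_le_right _ _
        simp only [hδdef]; linarith
      have hδη : δ ≤ η := by
        have : min η 1 ≤ η := min_le_left _ _
        simp only [hδdef]; linarith
      set x := (1 - δ) • y₀ with hx
      have hxn : ‖x‖ = 1 - δ := by
        rw [hx, norm_smul, Real.norm_eq_abs, abs_of_pos (by linarith), hy₀, mul_one]
      have hS0 : (({x, -x} : Finset X)).Nonempty := ⟨x, by simp⟩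
      have hS1 : ∀ z ∈ ({x, -x} : Finset X), ‖z‖ < 1 := by
        intro z hz
        rcases Finset.mem_insert.mp hz with rfl | hz
        · rw [hxn]; linarith
        · rw [Finset.mem_singleton.mp hz, norm_neg, hxn]; linarith
      have hinf : (1 - δ : ℝ) ≤ ⨅ y : {y : X // ε < ‖y‖ ∧ ‖y‖ ≤ 1},
          (({x, -x} : Finset X)).sup' hS0 (fun z => ‖z - (y : X)‖) := by
        apply le_ciInf
        rintro ⟨y, hy⟩
        have h1 : ‖x - y‖ ≤ ({x, -x} : Finset X).sup' hS0 (fun z => ‖z - y‖) :=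
          Finset.le_sup' (fun z => ‖z - y‖) (by simp : x ∈ ({x, -x} : Finset X))
        have h2 : ‖-x - y‖ ≤ ({x, -x} : Finset X).sup' hS0 (fun z => ‖z - y‖) :=
          Finset.le_sup' (fun z => ‖z - y‖) (by simp : -x ∈ ({x, -x} : Finset X))
        have h3 : ‖-x - y‖ = ‖x + y‖ := by
          rw [show -x - y = -(x + y) by abel, norm_neg]
        have h4 : ‖x + x‖ = 2 * (1 - δ) := by
          rw [show x + x = (2:ℝ) • x from (two_smul ℝ x).symm, norm_smul,
            Real.norm_eq_abs, hxn]
          norm_num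
        have h5 : ‖x + x‖ ≤ ‖x - y‖ + ‖x + y‖ := by
          calc ‖x + x‖ = ‖(x - y) + (x + y)‖ := by congr 1; abel
            _ ≤ _ := norm_add_le _ _
        rw [h3] at h2
        linarith
      have hsup := le_ciSup hbdd (⟨({x, -x} : Finset X), hS0, hS1⟩ :
        {S : Finset X // S.Nonempty ∧ ∀ x ∈ S, ‖x‖ < 1})
      have : (1 - δ : ℝ) ≤ ⨆ S : {S : Finset X // S.Nonempty ∧ ∀ x ∈ S, ‖x‖ < 1},
          ⨅ y : {y : X // ε < ‖y‖ ∧ ‖y‖ ≤ 1}, S.1.sup' S.2.1 (fun x => ‖x - (y : X)‖) :=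
        le_trans hinf hsup
      linarith
  · -- converse
    intro h S hS ε hε
    -- nontriviality
    have hne : ∃ x : X, x ≠ 0 := by
      by_contra hc
      push_neg at hc
      have h2 := h (1/2) (by norm_num) (by norm_num)
      rw [gammaIP] at h2
      haveI : IsEmpty {y : X // (1:ℝ)/2 < ‖y‖ ∧ ‖y‖ ≤ 1} := by
        refine ⟨fun y => ?_⟩
        have hy := y.2.1
        rw [hc y.1, norm_zero] at hy
        norm_num at hy
      haveI : Nonempty {S : Finset X // S.Nonempty ∧ ∀ x ∈ S, ‖x‖ < 1} :=
        ⟨⟨{0}, ⟨Finset.singleton_nonempty 0, by simp⟩⟩⟩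
      have : ∀ S : {S : Finset X // S.Nonempty ∧ ∀ x ∈ S, ‖x‖ < 1},
          (⨅ y : {y : X // (1:ℝ)/2 < ‖y‖ ∧ ‖y‖ ≤ 1},
            S.1.sup' S.2.1 (fun x => ‖x - (y : X)‖)) = 0 :=
        fun S => Real.iInf_of_isEmpty _
      simp only [this, ciSup_const] at h2
      norm_num at h2
    obtain ⟨x₀, hx₀⟩ := hne
    obtain ⟨y₁, hy₁⟩ := exists_norm_eq_aux x₀ hx₀ (t := 1) zero_le_one
    set δ := min (ε / 3) (1 / 2) with hδdef
    have hδ0 : 0 < δ := lt_min (by linarith) (by norm_num)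
    have hδh : δ ≤ 1 / 2 := min_le_right _ _
    have hδε : 3 * δ ≤ ε := by
      have : δ ≤ ε / 3 := min_le_left _ _
      linarith
    set ε' := 1 - δ with hε'def
    have hε'0 : 0 < ε' := by simp only [hε'def]; linarith
    have hε'1 : ε' < 1 := by simp only [hε'def]; linarith
    rcases S.eq_empty_or_nonempty with rfl | hSne
    · exact ⟨y₁, hy₁, by simp⟩
    haveI hYne : Nonempty {y : X // ε' < ‖y‖ ∧ ‖y‖ ≤ 1} :=
      ⟨⟨y₁, by rw [hy₁]; exact ⟨hε'1, le_refl 1⟩⟩⟩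
    have hγ := h ε' hε'0 hε'1
    rw [gammaIP] at hγ
    -- the family
    set T := (S.image (fun x => (1 - δ) • x)) ∪ (S.image (fun x => -((1 - δ) • x)))
      with hTdef
    have hT1 : T.Nonempty := by
      obtain ⟨a, ha⟩ := hSne
      exact ⟨(1 - δ) • a, by
        rw [hTdef, Finset.mem_union]
        exact Or.inl (Finset.mem_image_of_mem _ ha)⟩
    have hT2 : ∀ z ∈ T, ‖z‖ < 1 := by
      intro z hz
      rw [hTdef, Finset.mem_union, Finset.mem_image, Finset.mem_image] at hz
      have : ∀ x ∈ S, ‖(1 - δ) • x‖ = 1 - δ := by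
        intro x hx
        rw [norm_smul, Real.norm_eq_abs, abs_of_pos (by linarith), hS x hx, mul_one]
      rcases hz with ⟨x, hx, rfl⟩ | ⟨x, hx, rfl⟩
      · rw [this x hx]; linarith
      · rw [norm_neg, this x hx]; linarith
    have hbdd : BddAbove (Set.range (fun S : {S : Finset X // S.Nonempty ∧ ∀ x ∈ S, ‖x‖ < 1} =>
        ⨅ y : {y : X // ε' < ‖y‖ ∧ ‖y‖ ≤ 1}, S.1.sup' S.2.1 (fun x => ‖x - (y : X)‖))) := by
      by_contra hb
      rw [Real.iSup_of_not_bddAbove hb] at hγ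
      norm_num at hγ
    have hinf : (⨅ y : {y : X // ε' < ‖y‖ ∧ ‖y‖ ≤ 1},
        T.sup' hT1 (fun x => ‖x - (y : X)‖)) ≤ 1 := by
      have := le_ciSup hbdd (⟨T, hT1, hT2⟩ :
        {S : Finset X // S.Nonempty ∧ ∀ x ∈ S, ‖x‖ < 1})
      rw [hγ] at this
      exact this
    have hlt : (⨅ y : {y : X // ε' < ‖y‖ ∧ ‖y‖ ≤ 1},
        T.sup' hT1 (fun x => ‖x - (y : X)‖)) < 1 + δ :=
      lt_of_le_of_lt hinf (by linarith)
    obtain ⟨⟨y, hyε, hy1⟩, hyT⟩ := exists_lt_of_ciInf_lt hlt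
    have hy0 : (0:ℝ) < ‖y‖ := lt_trans hε'0 hyε
    set y' := ‖y‖⁻¹ • y with hy'def
    have hy'1 : ‖y'‖ = 1 := by
      rw [hy'def, norm_smul, Real.norm_eq_abs, abs_inv, abs_norm,
        inv_mul_cancel₀ (ne_of_gt hy0)]
    have hy'y : ‖y' - y‖ ≤ δ := by
      have : y' - y = (‖y‖⁻¹ - 1) • y := by
        rw [sub_smul, one_smul, hy'def]
      rw [this, norm_smul, Real.norm_eq_abs]
      have h1 : (0:ℝ) ≤ ‖y‖⁻¹ - 1 := by
        rw [sub_nonneg]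
        exact (one_le_inv₀ hy0).2 hy1
      rw [abs_of_nonneg h1, sub_mul, inv_mul_cancel₀ (ne_of_gt hy0), one_mul]
      simp only [hε'def] at hyε
      linarith
    refine ⟨y', hy'1, ?_⟩
    intro x hx
    have hmem1 : (1 - δ) • x ∈ T := by
      rw [hTdef, Finset.mem_union]
      exact Or.inl (Finset.mem_image_of_mem _ hx)
    have hmem2 : -((1 - δ) • x) ∈ T := by
      rw [hTdef, Finset.mem_union]
      exact Or.inr (Finset.mem_image_of_mem _ hx)
    have h1 : ‖(1 - δ) • x - y‖ < 1 + δ :=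
      lt_of_le_of_lt (Finset.le_sup' (fun z => ‖z - y‖) hmem1) hyT
    have h2 : ‖-((1 - δ) • x) - y‖ < 1 + δ :=
      lt_of_le_of_lt (Finset.le_sup' (fun z => ‖z - y‖) hmem2) hyT
    have h2' : ‖(1 - δ) • x + y‖ < 1 + δ := by
      rw [show (1 - δ) • x + y = -(-((1 - δ) • x) - y) by abel, norm_neg]
      exact h2
    have hxδ : ‖x - (1 - δ) • x‖ = δ := by
      rw [show x - (1 - δ) • x = δ • x by rw [sub_smul, one_smul]; abel,
        norm_smul, Real.norm_eq_abs, abs_of_pos hδ0, hS x hx, mul_one]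
    constructor
    · -- ‖x + y'‖ ≤ 1 + ε
      calc ‖x + y'‖ ≤ ‖x - (1 - δ) • x‖ + ‖(1 - δ) • x + y‖ + ‖y' - y‖ := by
            have : x + y' = (x - (1 - δ) • x) + ((1 - δ) • x + y) + (y' - y) := by abel
            rw [this]
            exact le_trans (norm_add_le _ _) (by gcongr; exact norm_add_le _ _)
        _ ≤ δ + (1 + δ) + δ := by rw [hxδ]; have := le_of_lt h2'; linarith
        _ ≤ 1 + ε := by linarith
    · calc ‖x - y'‖ ≤ ‖x - (1 - δ) • x‖ + ‖(1 - δ) • x - y‖ + ‖y' - y‖ := by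
            have : x - y' = (x - (1 - δ) • x) + ((1 - δ) • x - y) + -(y' - y) := by abel
            rw [this]
            exact le_trans (norm_add_le _ _)
              (by rw [norm_neg]; gcongr; exact norm_add_le _ _)
        _ ≤ δ + (1 + δ) + δ := by rw [hxδ]; have := le_of_lt h1; linarith
        _ ≤ 1 + ε := by linarith
end

section
/- If X is an ASQ Banach space, then for every separable closed subspace Y of X there exists a separable closed subspace Z with Y ⊂ Z ⊂ X such that Z is ASQ. -/
namespace ASQAux

open TopologicalSpace Set

variable {X : Type*} [NormedAddCommGroup X] [NormedSpace ℝ X]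

/-- Witness function: for a finset of norm-one vectors, a chosen ASQ witness. -/
noncomputable def w (h : IsASQ X) (F : Finset X) (k : ℕ) : X :=
  if hF : ∀ x ∈ F, ‖x‖ = 1 then
    (h F hF (1 / (k + 1)) (by positivity)).choose else 0

lemma w_spec (h : IsASQ X) (F : Finset X) (hF : ∀ x ∈ F, ‖x‖ = 1) (k : ℕ) :
    ‖w h F k‖ = 1 ∧ ∀ x ∈ F, ‖x + w h F k‖ ≤ 1 + 1 / (k + 1) ∧
      ‖x - w h F k‖ ≤ 1 + 1 / (k + 1) := by
  rw [w, dif_pos hF]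
  exact (h F hF (1 / (k + 1)) (by positivity)).choose_spec

/-- The unit sphere of the closed span of `s`. -/
def sph (s : Set X) : Set X :=
  {x | x ∈ closure (Submodule.span ℝ s : Set X) ∧ ‖x‖ = 1}

/-- A chosen countable dense subset of `sph s`. -/
noncomputable def DD (s : Set X) : Set X :=
  have := Classical.propDecidable
  if h : ∃ t, t ⊆ sph s ∧ t.Countable ∧ sph s ⊆ closure t then h.choose else ∅

lemma DD_spec {s : Set X} (hs : s.Countable) :
    DD s ⊆ sph s ∧ (DD s).Countable ∧ sph s ⊆ closure (DD s) := by
  have hsep : IsSeparable (sph s) := by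
    have := (hs.isSeparable.span (R := ℝ)).closure
    exact this.mono fun x hx => hx.1
  have hex := hsep.exists_countable_dense_subset
  rw [DD, dif_pos hex]
  exact hex.choose_spec

/-- One step of the construction: add witnesses for all finsets from `DD s`. -/
noncomputable def step (h : IsASQ X) (s : Set X) : Set X :=
  s ∪ ⋃ F ∈ {F : Finset X | ↑F ⊆ DD s}, ⋃ k : ℕ, {w h F k}

lemma step_countable (h : IsASQ X) {s : Set X} (hs : s.Countable) :
    (step h s).Countable := by
  refine hs.union ?_
  refine Countable.biUnion ?_ fun F _ => countable_iUnion fun k => countable_singleton _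
  have h1 : {F : Finset X | ↑F ⊆ DD s}.Countable := by
    have h2 := countable_setOf_finite_subset (DD_spec hs).2.1
    have : (fun F : Finset X => (↑F : Set X)) ⁻¹'
        {t | Set.Finite t ∧ t ⊆ DD s} = {F : Finset X | ↑F ⊆ DD s} := by
      ext F; simp [Finset.finite_toSet]
    rw [← this]
    exact h2.preimage (fun F G hFG => Finset.coe_injective hFG)
  exact h1

/-- The increasing sequence of countable sets. -/
noncomputable def C (h : IsASQ X) (c0 : Set X) : ℕ → Set X
  | 0 => c0
  | n + 1 => step h (C h c0 n)

lemma C_countable (h : IsASQ X) {c0 : Set X} (hc0 : c0.Countable) (n : ℕ) :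
    (C h c0 n).Countable := by
  induction n with
  | zero => exact hc0
  | succ n ih => exact step_countable h ih

lemma C_mono (h : IsASQ X) (c0 : Set X) : Monotone (C h c0) := by
  refine monotone_nat_of_le_succ fun n => ?_
  exact subset_union_left

end ASQAux

open TopologicalSpace Set ASQAux in
theorem stmt_19 (X : Type*) [NormedAddCommGroup X] [NormedSpace ℝ X] [CompleteSpace X]
    (h : IsASQ X) (Y : Submodule ℝ X) (hYc : IsClosed (Y : Set X))
    (hYsep : TopologicalSpace.IsSeparable (Y : Set X)) :
    ∃ Z : Submodule ℝ X, IsClosed (Z : Set X) ∧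
      TopologicalSpace.IsSeparable (Z : Set X) ∧ Y ≤ Z ∧ IsASQ Z := by
  obtain ⟨c0, hc0c, hc0d⟩ := hYsep
  set Cinf : Set X := ⋃ n, C h c0 n with hCinf
  have hCinfc : Cinf.Countable := countable_iUnion (C_countable h hc0c)
  set Z : Submodule ℝ X := (Submodule.span ℝ Cinf).topologicalClosure with hZ
  have hZset : (Z : Set X) = closure (Submodule.span ℝ Cinf : Set X) := rfl
  have hCZ : ∀ n, C h c0 n ⊆ (Z : Set X) := by
    intro n x hx
    rw [hZset]
    exact subset_closure (Submodule.subset_span (mem_iUnion.2 ⟨n, hx⟩))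
  refine ⟨Z, Submodule.isClosed_topologicalClosure _, ?_, ?_, ?_⟩
  · rw [hZset]
    exact (hCinfc.isSeparable.span (R := ℝ)).closure
  · intro x hx
    show x ∈ (Z : Set X)
    rw [hZset]
    have : x ∈ closure c0 := hc0d hx
    refine closure_mono (show c0 ⊆ _ from fun y hy =>
      Submodule.subset_span (mem_iUnion.2 ⟨0, hy⟩)) this
  · intro S hS ε hε
    classical
    set δ : ℝ := min (ε / 8) 4⁻¹ with hδdef
    have hδ0 : 0 < δ := lt_min (by linarith) (by norm_num)
    have hδε : δ ≤ ε / 8 := min_le_left _ _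
    have hδ4 : δ ≤ 4⁻¹ := min_le_right _ _
    have hdir : Directed (· ≤ ·) (fun n => Submodule.span ℝ (C h c0 n)) :=
      Monotone.directed_le (fun a b hab => Submodule.span_mono (C_mono h c0 hab))
    have stepA : ∀ x : Z, x ∈ S → ∃ n, ∃ v ∈ Submodule.span ℝ (C h c0 n),
        ‖v - (x : X)‖ < δ := by
      intro x _
      have hx : (x : X) ∈ closure (Submodule.span ℝ Cinf : Set X) := by
        rw [← hZset]; exact x.2
      obtain ⟨v, hv, hvd⟩ := Metric.mem_closure_iff.1 hx δ hδ0
      have hv' : v ∈ ⨆ n, Submodule.span ℝ (C h c0 n) := by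
        rw [← Submodule.span_iUnion]; exact hv
      obtain ⟨n, hn⟩ := (Submodule.mem_iSup_of_directed _ hdir).1 hv'
      exact ⟨n, v, hn, by rwa [dist_comm, dist_eq_norm] at hvd⟩
    set g : Z → ℕ := fun x => if hx : ∃ n, ∃ v ∈ Submodule.span ℝ (C h c0 n),
      ‖v - (x : X)‖ < δ then hx.choose else 0 with hg
    set N := S.sup g with hN
    have hDD := DD_spec (C_countable h hc0c N)
    have stepB : ∀ x ∈ S, ∃ u ∈ DD (C h c0 N), ‖u - (x : X)‖ < 3 * δ := by
      intro x hx
      have hx' := stepA x hx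
      have hgx : ∃ v ∈ Submodule.span ℝ (C h c0 (g x)), ‖v - (x : X)‖ < δ := by
        simp only [hg, dif_pos hx']
        exact hx'.choose_spec
      obtain ⟨v, hv, hvd⟩ := hgx
      have hvN : v ∈ Submodule.span ℝ (C h c0 N) :=
        Submodule.span_mono (C_mono h c0 (Finset.le_sup hx)) hv
      have hx1 : ‖(x : X)‖ = 1 := hS x hx
      have hvnorm : (1 : ℝ) - δ ≤ ‖v‖ := by
        have h1 : ‖(x : X)‖ - ‖v‖ ≤ ‖v - (x : X)‖ := by
          rw [norm_sub_rev]; exact norm_sub_norm_le _ _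
        rw [hx1] at h1; linarith
      have hvpos : 0 < ‖v‖ := by
        have : δ ≤ 4⁻¹ := hδ4
        linarith
      set v' : X := ‖v‖⁻¹ • v with hv'def
      have hv'norm : ‖v'‖ = 1 := by
        rw [hv'def, norm_smul, norm_inv, norm_norm, inv_mul_cancel₀ (ne_of_gt hvpos)]
      have hv'sph : v' ∈ sph (C h c0 N) :=
        ⟨subset_closure (Submodule.smul_mem _ _ hvN), hv'norm⟩
      obtain ⟨u, hu, hud⟩ := Metric.mem_closure_iff.1 (hDD.2.2 hv'sph) δ hδ0
      refine ⟨u, hu, ?_⟩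
      have h2 : ‖v' - v‖ ≤ δ := by
        have heq : v' - v = (‖v‖⁻¹ - 1) • v := by rw [sub_smul, one_smul, hv'def]
        have h3 : (‖v‖⁻¹ - 1) * ‖v‖ = 1 - ‖v‖ := by field_simp
        have h4 : ‖v‖ - ‖(x : X)‖ ≤ ‖v - (x : X)‖ := norm_sub_norm_le _ _
        rw [hx1] at h4
        calc ‖v' - v‖ = |‖v‖⁻¹ - 1| * ‖v‖ := by rw [heq, norm_smul, Real.norm_eq_abs]
          _ = |(‖v‖⁻¹ - 1) * ‖v‖| := by rw [abs_mul, abs_of_nonneg (norm_nonneg v)]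
          _ = |1 - ‖v‖| := by rw [h3]
          _ ≤ δ := by rw [abs_le]; constructor <;> linarith
      have h5 : ‖u - v'‖ < δ := by rwa [dist_comm, dist_eq_norm] at hud
      calc ‖u - (x : X)‖ ≤ ‖u - v'‖ + ‖v' - v‖ + ‖v - (x : X)‖ := by
            have := norm_add₃_le (a := u - v') (b := v' - v) (c := v - (x : X))
            simpa using this
        _ < 3 * δ := by linarith
    set uf : Z → X := fun x => if hx : ∃ u ∈ DD (C h c0 N), ‖u - (x : X)‖ < 3 * δ
      then hx.choose else 0 with hufdef
    have huf : ∀ x ∈ S, uf x ∈ DD (C h c0 N) ∧ ‖uf x - (x : X)‖ < 3 * δ := by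
      intro x hx
      have hx' := stepB x hx
      simp only [hufdef, dif_pos hx']
      exact hx'.choose_spec
    set F : Finset X := S.image uf with hF
    have hFDD : (↑F : Set X) ⊆ DD (C h c0 N) := by
      intro u hu
      obtain ⟨x, hx, rfl⟩ := Finset.mem_image.1 hu
      exact (huf x hx).1
    have hF1 : ∀ u ∈ F, ‖u‖ = 1 := fun u hu => (hDD.1 (hFDD hu)).2
    obtain ⟨k, hk⟩ := exists_nat_one_div_lt (show (0 : ℝ) < ε / 2 by linarith)
    obtain ⟨hw1, hw2⟩ := w_spec h F hF1 k
    have hwC : w h F k ∈ C h c0 (N + 1) := by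
      show w h F k ∈ step h (C h c0 N)
      refine Or.inr ?_
      refine mem_biUnion (show F ∈ {F : Finset X | ↑F ⊆ DD (C h c0 N)} from hFDD) ?_
      exact mem_iUnion.2 ⟨k, rfl⟩
    have hwZ : w h F k ∈ Z := hCZ (N + 1) hwC
    refine ⟨⟨w h F k, hwZ⟩, ?_, ?_⟩
    · exact hw1
    · intro x hx
      obtain ⟨hu1, hu2⟩ := huf x hx
      obtain ⟨hb1, hb2⟩ := hw2 (uf x) (Finset.mem_image_of_mem uf hx)
      have hknn : (0:ℝ) ≤ 1 / (k + 1) := by positivity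
      constructor
      · show ‖((x : X) + w h F k)‖ ≤ 1 + ε
        calc ‖(x : X) + w h F k‖ = ‖(uf x + w h F k) + ((x : X) - uf x)‖ := by
              rw [show (x : X) + w h F k = (uf x + w h F k) + ((x : X) - uf x) by abel]
          _ ≤ ‖uf x + w h F k‖ + ‖(x : X) - uf x‖ := norm_add_le _ _
          _ ≤ (1 + 1 / (k + 1)) + 3 * δ := by
              rw [norm_sub_rev (x : X) (uf x)]; exact add_le_add hb1 hu2.le
          _ ≤ 1 + ε := by linarith
      · show ‖((x : X) - w h F k)‖ ≤ 1 + ε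
        calc ‖(x : X) - w h F k‖ = ‖(uf x - w h F k) + ((x : X) - uf x)‖ := by
              rw [show (x : X) - w h F k = (uf x - w h F k) + ((x : X) - uf x) by abel]
          _ ≤ ‖uf x - w h F k‖ + ‖(x : X) - uf x‖ := norm_add_le _ _
          _ ≤ (1 + 1 / (k + 1)) + 3 * δ := by
              rw [norm_sub_rev (x : X) (uf x)]; exact add_le_add hb2 hu2.le
          _ ≤ 1 + ε := by linarith
end
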